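/- arXiv:2412.12769 — 4 statements merged into one kernel-verified Lean document; each statement's English description precedes it below -/
import Mathlib

section
/- Let $X$ be a quasi-Banach space with quasi-norm constant $C \geq 1$, i.e. $\|x+y\| \leq C(\|x\|+\|y\|)$ for all $x,y$. If a power series $\sum_{k=0}^{\infty} f_k z^k$ with coefficients $f_k \in X$ converges in $X$ for every $z$ in the open disc $B_R(0) \subseteq \mathbb{C}$, then for every $r < R$ the series converges absolutely and uniformly on the closed disc $\overline{B_r(0)}$. -/
open Filter Topology Finset

structure QBS (X : Type*) [AddCommGroup X] [Module ℂ X] where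
  qnorm : X → ℝ
  Cq : ℝ
  one_le_Cq : 1 ≤ Cq
  qnorm_nonneg : ∀ x, 0 ≤ qnorm x
  qnorm_eq_zero_iff : ∀ x, qnorm x = 0 ↔ x = 0
  qnorm_smul : ∀ (c : ℂ) (x), qnorm (c • x) = ‖c‖ * qnorm x
  qnorm_add_le : ∀ x y, qnorm (x + y) ≤ Cq * (qnorm x + qnorm y)
  complete : ∀ u : ℕ → X,
    (∀ ε : ℝ, 0 < ε → ∃ N, ∀ m ≥ N, ∀ n ≥ N, qnorm (u m - u n) ≤ ε) →
    ∃ x, Tendsto (fun n => qnorm (u n - x)) atTop (𝓝 0)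

set_option linter.unusedSectionVars false

namespace QBSproof

variable {X : Type*} [AddCommGroup X] [Module ℂ X]

lemma qnorm_zero (q : QBS X) : q.qnorm 0 = 0 := (q.qnorm_eq_zero_iff 0).2 rfl

lemma Cq_pos (q : QBS X) : 0 < q.Cq := lt_of_lt_of_le one_pos q.one_le_Cq

lemma qnorm_neg (q : QBS X) (x : X) : q.qnorm (-x) = q.qnorm x := by
  have h := q.qnorm_smul (-1) x
  simpa using h

lemma dyadic (q : QBS X) (x : ℕ → X) : ∀ j a b : ℕ, b ≤ a + 2 ^ j →
    q.qnorm (∑ k ∈ Finset.Ico a b, x k) ≤ q.Cq ^ j * ∑ k ∈ Finset.Ico a b, q.qnorm (x k) := by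
  intro j
  induction j with
  | zero =>
    intro a b hb
    rcases le_or_gt b a with h | h
    · rw [Finset.Ico_eq_empty (by omega)]
      simp [qnorm_zero]
    · have hb' : b = a + 1 := by omega
      subst hb'
      simp [Nat.Ico_succ_singleton]
  | succ j ih =>
    intro a b hb
    have h2 : (2:ℕ) ^ (j+1) = 2 ^ j + 2 ^ j := by ring
    rcases le_or_gt b a with h | h
    · rw [Finset.Ico_eq_empty (by omega)]
      simp [qnorm_zero]
    · set c := min b (a + 2 ^ j) with hc
      have hac : a ≤ c := by omega
      have hcb : c ≤ b := by omega
      have A := ih a c (by omega)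
      have B := ih c b (by omega)
      rw [← Finset.sum_Ico_consecutive x hac hcb,
        ← Finset.sum_Ico_consecutive (fun k => q.qnorm (x k)) hac hcb]
      have tri := q.qnorm_add_le (∑ k ∈ Finset.Ico a c, x k) (∑ k ∈ Finset.Ico c b, x k)
      have hCq := Cq_pos q
      calc q.qnorm ((∑ k ∈ Finset.Ico a c, x k) + ∑ k ∈ Finset.Ico c b, x k)
          ≤ q.Cq * (q.qnorm (∑ k ∈ Finset.Ico a c, x k) + q.qnorm (∑ k ∈ Finset.Ico c b, x k)) := tri
        _ ≤ q.Cq * ((q.Cq ^ j * ∑ k ∈ Finset.Ico a c, q.qnorm (x k))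
              + q.Cq ^ j * ∑ k ∈ Finset.Ico c b, q.qnorm (x k)) :=
            mul_le_mul_of_nonneg_left (add_le_add A B) hCq.le
        _ = q.Cq ^ (j+1) * ((∑ k ∈ Finset.Ico a c, q.qnorm (x k))
              + ∑ k ∈ Finset.Ico c b, q.qnorm (x k)) := by ring

lemma seq (q : QBS X) : ∀ (J : ℕ) (b : ℕ → X),
    q.qnorm (∑ j ∈ Finset.range J, b j) ≤ ∑ j ∈ Finset.range J, q.Cq ^ (j+1) * q.qnorm (b j) := by
  intro J
  induction J with
  | zero => intro b; simp [qnorm_zero]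
  | succ J ih =>
    intro b
    rw [Finset.sum_range_succ', Finset.sum_range_succ']
    have tri := q.qnorm_add_le (∑ j ∈ Finset.range J, b (j+1)) (b 0)
    have hCq := Cq_pos q
    have A := ih (fun j => b (j+1))
    calc q.qnorm ((∑ j ∈ Finset.range J, b (j+1)) + b 0)
        ≤ q.Cq * (q.qnorm (∑ j ∈ Finset.range J, b (j+1)) + q.qnorm (b 0)) := tri
      _ ≤ q.Cq * ((∑ j ∈ Finset.range J, q.Cq ^ (j+1) * q.qnorm (b (j+1))) + q.qnorm (b 0)) :=
          mul_le_mul_of_nonneg_left (by linarith [A]) hCq.le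
      _ = (∑ j ∈ Finset.range J, q.Cq * (q.Cq ^ (j+1) * q.qnorm (b (j+1)))) + q.Cq * q.qnorm (b 0) := by
          rw [mul_add, Finset.mul_sum]
      _ = (∑ j ∈ Finset.range J, q.Cq ^ (j+1+1) * q.qnorm (b (j+1))) + q.Cq ^ (0+1) * q.qnorm (b 0) := by
          congr 1
          · exact Finset.sum_congr rfl (fun j _ => by ring)
          · ring

lemma decomp (x : ℕ → X) (n m : ℕ) (hnm : n ≤ m) : ∀ J : ℕ,
    ∑ k ∈ Finset.Ico n (min m (n + 2 ^ J - 1)), x k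
      = ∑ j ∈ Finset.range J,
          ∑ k ∈ Finset.Ico (min m (n + 2 ^ j - 1)) (min m (n + 2 ^ (j+1) - 1)), x k := by
  intro J
  induction J with
  | zero => simp [min_eq_right hnm]
  | succ J ih =>
    have h0 : 1 ≤ (2:ℕ) ^ J := Nat.one_le_two_pow
    have h1 : n ≤ min m (n + 2 ^ J - 1) := by omega
    have hle : (2:ℕ) ^ J ≤ 2 ^ (J+1) := Nat.pow_le_pow_right (by norm_num) (Nat.le_succ J)
    have h2 : min m (n + 2 ^ J - 1) ≤ min m (n + 2 ^ (J+1) - 1) := by omega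
    rw [Finset.sum_range_succ, ← ih]
    exact (Finset.sum_Ico_consecutive x h1 h2).symm

end QBSproof

open QBSproof in
/-- If a power series `∑ fₖ zᵏ` with coefficients in a quasi-Banach space
converges for every `z` in the open disc `B_R(0)`, then for every `r < R` it
converges absolutely and uniformly on the closed disc of radius `r`. -/
theorem power_series_abs_unif_conv {X : Type*} [AddCommGroup X] [Module ℂ X]
    (q : QBS X) (f : ℕ → X) (R : ℝ) (hR : 0 < R) (S : ℂ → X)
    (hconv : ∀ z : ℂ, ‖z‖ < R →
      Tendsto (fun n => q.qnorm ((∑ k ∈ Finset.range n, z ^ k • f k) - S z))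
        atTop (𝓝 0))
    (r : ℝ) (hr0 : 0 ≤ r) (hrR : r < R) :
    (Summable fun k => q.qnorm (f k) * r ^ k) ∧
    ∀ ε : ℝ, 0 < ε → ∃ N, ∀ n ≥ N, ∀ z : ℂ, ‖z‖ ≤ r →
      q.qnorm ((∑ k ∈ Finset.range n, z ^ k • f k) - S z) ≤ ε := by
  have hCq1 := q.one_le_Cq
  have hCq0 := Cq_pos q
  set ρ : ℝ := (r + R) / 2 with hρdef
  have hρpos : 0 < ρ := by rw [hρdef]; linarith
  have hρR : ρ < R := by rw [hρdef]; linarith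
  have hrρ : r < ρ := by rw [hρdef]; linarith
  have habs : ‖(ρ : ℂ)‖ = ρ := by
    rw [Complex.norm_real, Real.norm_eq_abs, abs_of_pos hρpos]
  have hconvρ := hconv (ρ : ℂ) (by rw [habs]; exact hρR)
  set d : ℕ → ℝ := fun k => q.qnorm ((∑ i ∈ Finset.range k, (ρ:ℂ) ^ i • f i) - S ρ) with hd
  -- term bound
  have hterm : ∀ k, ρ ^ k * q.qnorm (f k) ≤ q.Cq * (d (k+1) + d k) := by
    intro k
    have e2 : q.qnorm ((ρ:ℂ) ^ k • f k) = ρ ^ k * q.qnorm (f k) := by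
      rw [q.qnorm_smul, norm_pow, habs]
    have e1 : (ρ:ℂ) ^ k • f k
        = ((∑ i ∈ Finset.range (k+1), (ρ:ℂ) ^ i • f i) - S ρ)
          + -((∑ i ∈ Finset.range k, (ρ:ℂ) ^ i • f i) - S ρ) := by
      rw [Finset.sum_range_succ]; abel
    rw [← e2, e1]
    refine (q.qnorm_add_le _ _).trans ?_
    rw [qnorm_neg]
  have htend : Tendsto (fun k => q.Cq * (d (k+1) + d k)) atTop (𝓝 0) := by
    have h1 : Tendsto (fun k => d (k+1)) atTop (𝓝 0) := hconvρ.comp (tendsto_add_atTop_nat 1)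
    have h3 := (h1.add hconvρ).const_mul q.Cq
    simpa using h3
  have hev : ∀ᶠ k in atTop, ρ ^ k * q.qnorm (f k) ≤ 1 := by
    filter_upwards [htend.eventually (gt_mem_nhds one_pos)] with k hk
    exact (hterm k).trans hk.le
  obtain ⟨N₀, hN₀⟩ := eventually_atTop.mp hev
  set M : ℝ := (∑ k ∈ Finset.range N₀, ρ ^ k * q.qnorm (f k)) + 1 with hMdef
  have hsum_nonneg : 0 ≤ ∑ k ∈ Finset.range N₀, ρ ^ k * q.qnorm (f k) :=
    Finset.sum_nonneg (fun k _ => mul_nonneg (pow_nonneg hρpos.le k) (q.qnorm_nonneg _))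
  have hM1 : 1 ≤ M := by rw [hMdef]; linarith
  have hMbound : ∀ k, ρ ^ k * q.qnorm (f k) ≤ M := by
    intro k
    rcases lt_or_ge k N₀ with h | h
    · have h2 : ρ ^ k * q.qnorm (f k) ≤ ∑ i ∈ Finset.range N₀, ρ ^ i * q.qnorm (f i) := by
        simpa using Finset.single_le_sum
          (f := fun i => ρ ^ i * q.qnorm (f i))
          (fun i _ => mul_nonneg (pow_nonneg hρpos.le i) (q.qnorm_nonneg _))
          (Finset.mem_range.2 h)
      rw [hMdef]; linarith
    · exact (hN₀ k h).trans hM1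
  set θ : ℝ := r / ρ with hθdef
  have hθ0 : 0 ≤ θ := div_nonneg hr0 hρpos.le
  have hθ1 : θ < 1 := (div_lt_one hρpos).2 hrρ
  have hrθ : r = ρ * θ := by rw [hθdef]; field_simp
  have hM : ∀ k, q.qnorm (f k) * r ^ k ≤ M * θ ^ k := by
    intro k
    calc q.qnorm (f k) * r ^ k = (ρ ^ k * q.qnorm (f k)) * θ ^ k := by
          rw [hrθ, mul_pow]; ring
      _ ≤ M * θ ^ k := mul_le_mul_of_nonneg_right (hMbound k) (pow_nonneg hθ0 k)
  constructor
  · exact Summable.of_nonneg_of_le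
      (fun k => mul_nonneg (q.qnorm_nonneg _) (pow_nonneg hr0 k)) hM
      ((summable_geometric_of_lt_one hθ0 hθ1).mul_left M)
  -- the weight sequence
  set a : ℕ → ℝ := fun j => q.Cq ^ (2*j+2) * 2 ^ j * θ ^ (2 ^ j - 1) with hadef
  have ha_nonneg : ∀ j, 0 ≤ a j := by
    intro j
    apply mul_nonneg (mul_nonneg (pow_nonneg hCq0.le _) (by positivity)) (pow_nonneg hθ0 _)
  have hrec : ∀ j, a (j+1) = a j * (2 * q.Cq ^ 2 * θ ^ (2 ^ j)) := by
    intro j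
    have h1 : 2*(j+1)+2 = (2*j+2) + 2 := by ring
    have h2 : 2 ^ (j+1) - 1 = (2 ^ j - 1) + 2 ^ j := by
      have : 1 ≤ (2:ℕ) ^ j := Nat.one_le_two_pow
      omega
    rw [show a (j+1) = q.Cq ^ (2*(j+1)+2) * 2 ^ (j+1) * θ ^ (2 ^ (j+1) - 1) from rfl,
      show a j = q.Cq ^ (2*j+2) * 2 ^ j * θ ^ (2 ^ j - 1) from rfl, h1, h2,
      pow_add q.Cq, pow_add θ]
    ring
  have hsuma : Summable a := by
    apply summable_of_ratio_norm_eventually_le (r := 1/2) (by norm_num)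
    have hpos : (0:ℝ) < 1 / (4 * q.Cq ^ 2) := by positivity
    have h4 : Tendsto (fun j : ℕ => θ ^ j) atTop (𝓝 0) :=
      tendsto_pow_atTop_nhds_zero_of_lt_one hθ0 hθ1
    filter_upwards [h4.eventually (gt_mem_nhds hpos)] with j hj
    have hθ2 : θ ^ (2 ^ j) ≤ θ ^ j :=
      pow_le_pow_of_le_one hθ0 hθ1.le (Nat.le_of_lt (Nat.lt_two_pow_self (n := j)))
    have ht : 2 * q.Cq ^ 2 * θ ^ (2 ^ j) ≤ 1/2 := by
      have h5 : θ ^ (2 ^ j) ≤ 1 / (4 * q.Cq ^ 2) := hθ2.trans hj.le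
      have h6 : 2 * q.Cq ^ 2 * θ ^ (2 ^ j) ≤ 2 * q.Cq ^ 2 * (1 / (4 * q.Cq ^ 2)) :=
        mul_le_mul_of_nonneg_left h5 (by positivity)
      have h7 : 2 * q.Cq ^ 2 * (1 / (4 * q.Cq ^ 2)) = 1/2 := by field_simp; ring
      linarith
    rw [hrec j, Real.norm_of_nonneg (ha_nonneg _), Real.norm_of_nonneg
      (mul_nonneg (ha_nonneg j) (by positivity))]
    calc a j * (2 * q.Cq ^ 2 * θ ^ (2 ^ j)) ≤ a j * (1/2) :=
          mul_le_mul_of_nonneg_left ht (ha_nonneg j)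
      _ = 1/2 * a j := by ring
  set K : ℝ := ∑' j, a j with hKdef
  have hK0 : 0 ≤ K := tsum_nonneg ha_nonneg
  have hKpart : ∀ J, ∑ j ∈ Finset.range J, a j ≤ K :=
    fun J => Summable.sum_le_tsum (Finset.range J) (fun j _ => ha_nonneg j) hsuma
  -- key uniform Cauchy bound
  have key : ∀ n m : ℕ, n ≤ m → ∀ z : ℂ, ‖z‖ ≤ r →
      q.qnorm (∑ k ∈ Finset.Ico n m, z ^ k • f k) ≤ M * K * θ ^ n := by
    intro n m hnm z hz
    have hzk : ∀ k, q.qnorm (z ^ k • f k) ≤ M * θ ^ k := by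
      intro k
      rw [q.qnorm_smul, norm_pow]
      calc ‖z‖ ^ k * q.qnorm (f k) ≤ r ^ k * q.qnorm (f k) :=
            mul_le_mul_of_nonneg_right (pow_le_pow_left₀ (norm_nonneg z) hz k)
              (q.qnorm_nonneg _)
        _ = q.qnorm (f k) * r ^ k := by ring
        _ ≤ M * θ ^ k := hM k
    have hJm : min m (n + 2 ^ m - 1) = m := by
      have := Nat.lt_two_pow_self (n := m)
      omega
    have hde := decomp (fun k => z ^ k • f k) n m hnm m
    rw [hJm] at hde
    rw [hde]
    have hblock : ∀ j ∈ Finset.range m,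
        q.Cq ^ (j+1) * q.qnorm (∑ k ∈
            Finset.Ico (min m (n + 2 ^ j - 1)) (min m (n + 2 ^ (j+1) - 1)), z ^ k • f k)
          ≤ a j * (M * θ ^ n) := by
      intro j _
      have h0 : 1 ≤ (2:ℕ) ^ j := Nat.one_le_two_pow
      have h2 : (2:ℕ) ^ (j+1) = 2 ^ j + 2 ^ j := by ring
      have hd1 : min m (n + 2 ^ (j+1) - 1) ≤ min m (n + 2 ^ j - 1) + 2 ^ (j+1) := by omega
      have step1 := dyadic q (fun k => z ^ k • f k) (j+1)
        (min m (n + 2 ^ j - 1)) (min m (n + 2 ^ (j+1) - 1)) hd1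
      -- bound the sum of qnorms
      have hsub : Finset.Ico (min m (n + 2 ^ j - 1)) (min m (n + 2 ^ (j+1) - 1))
          ⊆ Finset.Ico (n + 2 ^ j - 1) (n + 2 ^ (j+1) - 1) := by
        intro k hk
        simp only [Finset.mem_Ico] at *
        omega
      have step2 : ∑ k ∈ Finset.Ico (min m (n + 2 ^ j - 1)) (min m (n + 2 ^ (j+1) - 1)),
            q.qnorm (z ^ k • f k)
          ≤ ∑ k ∈ Finset.Ico (n + 2 ^ j - 1) (n + 2 ^ (j+1) - 1), M * θ ^ k := by
        refine le_trans (Finset.sum_le_sum (fun k _ => hzk k)) ?_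
        exact Finset.sum_le_sum_of_subset_of_nonneg hsub
          (fun k _ _ => mul_nonneg (by linarith) (pow_nonneg hθ0 k))
      have step3 : ∑ k ∈ Finset.Ico (n + 2 ^ j - 1) (n + 2 ^ (j+1) - 1), M * θ ^ k
          ≤ (2:ℝ) ^ j * (M * θ ^ (n + 2 ^ j - 1)) := by
        have hcard : (Finset.Ico (n + 2 ^ j - 1) (n + 2 ^ (j+1) - 1)).card = 2 ^ j := by
          rw [Nat.card_Ico]; omega
        calc ∑ k ∈ Finset.Ico (n + 2 ^ j - 1) (n + 2 ^ (j+1) - 1), M * θ ^ k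
            ≤ ∑ k ∈ Finset.Ico (n + 2 ^ j - 1) (n + 2 ^ (j+1) - 1), M * θ ^ (n + 2 ^ j - 1) := by
              refine Finset.sum_le_sum (fun k hk => ?_)
              have hk' := (Finset.mem_Ico.1 hk).1
              exact mul_le_mul_of_nonneg_left
                (pow_le_pow_of_le_one hθ0 hθ1.le hk') (by linarith)
          _ = (2:ℝ) ^ j * (M * θ ^ (n + 2 ^ j - 1)) := by
              rw [Finset.sum_const, hcard, nsmul_eq_mul, Nat.cast_pow]
              norm_num
      have hexp : n + 2 ^ j - 1 = n + (2 ^ j - 1) := by omega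
      have step4 : (2:ℝ) ^ j * (M * θ ^ (n + 2 ^ j - 1)) = (2:ℝ) ^ j * M * θ ^ n * θ ^ (2 ^ j - 1) := by
        rw [hexp, pow_add]; ring
      have hq1 : (0:ℝ) ≤ q.Cq ^ (j+1) := pow_nonneg hCq0.le _
      calc q.Cq ^ (j+1) * q.qnorm (∑ k ∈
              Finset.Ico (min m (n + 2 ^ j - 1)) (min m (n + 2 ^ (j+1) - 1)), z ^ k • f k)
          ≤ q.Cq ^ (j+1) * (q.Cq ^ (j+1) * ((2:ℝ) ^ j * M * θ ^ n * θ ^ (2 ^ j - 1))) := by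
            refine mul_le_mul_of_nonneg_left ?_ hq1
            refine step1.trans (mul_le_mul_of_nonneg_left ?_ hq1)
            rw [← step4]
            exact step2.trans step3
        _ = a j * (M * θ ^ n) := by
            simp only [hadef]
            rw [show 2*j+2 = (j+1)+(j+1) by ring, pow_add]
            ring
    calc q.qnorm (∑ j ∈ Finset.range m, ∑ k ∈
            Finset.Ico (min m (n + 2 ^ j - 1)) (min m (n + 2 ^ (j+1) - 1)), z ^ k • f k)
        ≤ ∑ j ∈ Finset.range m, q.Cq ^ (j+1) * q.qnorm (∑ k ∈
            Finset.Ico (min m (n + 2 ^ j - 1)) (min m (n + 2 ^ (j+1) - 1)), z ^ k • f k) :=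
          seq q m _
      _ ≤ ∑ j ∈ Finset.range m, a j * (M * θ ^ n) := Finset.sum_le_sum hblock
      _ = (∑ j ∈ Finset.range m, a j) * (M * θ ^ n) := by rw [← Finset.sum_mul]
      _ ≤ K * (M * θ ^ n) := by
          exact mul_le_mul_of_nonneg_right (hKpart m)
            (mul_nonneg (by linarith) (pow_nonneg hθ0 n))
      _ = M * K * θ ^ n := by ring
  -- pointwise limit bound
  have hfinal : ∀ n : ℕ, ∀ z : ℂ, ‖z‖ ≤ r →
      q.qnorm ((∑ k ∈ Finset.range n, z ^ k • f k) - S z) ≤ q.Cq * (M * K * θ ^ n) := by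
    intro n z hz
    have hzR : ‖z‖ < R := lt_of_le_of_lt hz (lt_trans hrρ hρR)
    have hzconv := hconv z hzR
    have hbound : ∀ᶠ m in atTop,
        q.qnorm ((∑ k ∈ Finset.range n, z ^ k • f k) - S z)
          ≤ q.Cq * (M * K * θ ^ n)
            + q.Cq * q.qnorm ((∑ k ∈ Finset.range m, z ^ k • f k) - S z) := by
      filter_upwards [eventually_ge_atTop n] with m hm
      have hsplit : (∑ k ∈ Finset.range n, z ^ k • f k) - S z
          = -(∑ k ∈ Finset.Ico n m, z ^ k • f k)
            + ((∑ k ∈ Finset.range m, z ^ k • f k) - S z) := by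
        rw [Finset.sum_Ico_eq_sub _ hm]
        abel
      rw [hsplit]
      refine (q.qnorm_add_le _ _).trans ?_
      rw [qnorm_neg, mul_add]
      exact add_le_add (mul_le_mul_of_nonneg_left (key n m hm z hz) hCq0.le) le_rfl
    have hlim : Tendsto (fun m => q.Cq * (M * K * θ ^ n)
        + q.Cq * q.qnorm ((∑ k ∈ Finset.range m, z ^ k • f k) - S z)) atTop
        (𝓝 (q.Cq * (M * K * θ ^ n))) := by
      have := (hzconv.const_mul q.Cq).const_add (q.Cq * (M * K * θ ^ n))
      simpa using this
    exact ge_of_tendsto hlim hbound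
  intro ε hε
  have htend2 : Tendsto (fun n : ℕ => q.Cq * (M * K * θ ^ n)) atTop (𝓝 0) := by
    have h4 : Tendsto (fun n : ℕ => θ ^ n) atTop (𝓝 0) :=
      tendsto_pow_atTop_nhds_zero_of_lt_one hθ0 hθ1
    have := (h4.const_mul (M * K)).const_mul q.Cq
    simpa [mul_comm, mul_assoc, mul_left_comm] using this
  obtain ⟨N, hN⟩ := eventually_atTop.mp (htend2.eventually (gt_mem_nhds hε))
  exact ⟨N, fun n hn z hz => (hfinal n z hz).trans (hN n hn).le⟩
end

section
/- Let $X_0, X_1$ be quasi-Banach function spaces over $\Omega$, $\theta \in (0,1)$, and suppose both $X_0$ and $X_1$ are separable. Then the Calderón product $X_0^{1-\theta}X_1^\theta$ is separable. -/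
open MeasureTheory Filter Topology Finset

noncomputable section

/-- A quasi-Banach function space over a measure space `(α, μ)`:
a quasi-Banach space of (a.e. classes of) measurable functions with a weak
order unit and the lattice property. -/
structure QBFS (α : Type*) [MeasurableSpace α] (μ : MeasureTheory.Measure α) where
  Mem : (α → ℂ) → Prop
  qnorm : (α → ℂ) → ℝ
  Cq : ℝ
  one_le_Cq : 1 ≤ Cq
  mem_aemeasurable : ∀ f, Mem f → AEMeasurable f μ
  mem_congr : ∀ f g, Mem f → f =ᵐ[μ] g → Mem g
  qnorm_congr : ∀ f g, f =ᵐ[μ] g → qnorm f = qnorm g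
  qnorm_nonneg : ∀ f, 0 ≤ qnorm f
  qnorm_eq_zero_iff : ∀ f, Mem f → (qnorm f = 0 ↔ f =ᵐ[μ] 0)
  qnorm_smul : ∀ (c : ℂ) (f), qnorm (c • f) = ‖c‖ * qnorm f
  add_mem : ∀ f g, Mem f → Mem g → Mem (f + g)
  smul_mem : ∀ (c : ℂ) (f), Mem f → Mem (c • f)
  qnorm_add_le : ∀ f g, Mem f → Mem g → qnorm (f + g) ≤ Cq * (qnorm f + qnorm g)
  exists_weak_unit : ∃ f, Mem f ∧ ∀ᵐ ω ∂μ, 0 < ‖f ω‖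
  lattice_mem : ∀ f g, Mem f → AEMeasurable g μ →
    (∀ᵐ ω ∂μ, ‖g ω‖ ≤ ‖f ω‖) → Mem g
  lattice_qnorm : ∀ f g, Mem f →
    (∀ᵐ ω ∂μ, ‖g ω‖ ≤ ‖f ω‖) → qnorm g ≤ qnorm f
  complete : ∀ u : ℕ → α → ℂ, (∀ n, Mem (u n)) →
    (∀ ε : ℝ, 0 < ε → ∃ N, ∀ m ≥ N, ∀ n ≥ N, qnorm (u m - u n) ≤ ε) →
    ∃ f, Mem f ∧ Tendsto (fun n => qnorm (u n - f)) atTop (𝓝 0)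

variable {α : Type*} [MeasurableSpace α] {μ : MeasureTheory.Measure α}

/-- Membership in the sum space `X₀ + X₁`. -/
def SumMem (X0 X1 : QBFS α μ) (f : α → ℂ) : Prop :=
  ∃ f0 f1, X0.Mem f0 ∧ X1.Mem f1 ∧ f =ᵐ[μ] f0 + f1

/-- The set of numbers `‖f₀‖ + ‖f₁‖` over decompositions `f = f₀ + f₁`. -/
def sumNormSet (X0 X1 : QBFS α μ) (f : α → ℂ) : Set ℝ :=
  {r | ∃ f0 f1, X0.Mem f0 ∧ X1.Mem f1 ∧ f =ᵐ[μ] f0 + f1 ∧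
    r = X0.qnorm f0 + X1.qnorm f1}

/-- The quasi-norm of the sum space `X₀ + X₁`. -/
def sumNorm (X0 X1 : QBFS α μ) (f : α → ℂ) : ℝ := sInf (sumNormSet X0 X1 f)

/-- The set of numbers `‖f₀‖^(1-θ) ‖f₁‖^θ` over factorizations
`|f| ≤ |f₀|^(1-θ) |f₁|^θ` a.e. -/
def calSet (X0 X1 : QBFS α μ) (θ : ℝ) (f : α → ℂ) : Set ℝ :=
  {r | ∃ f0 f1, X0.Mem f0 ∧ X1.Mem f1 ∧
    (∀ᵐ ω ∂μ, ‖f ω‖ ≤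
      ‖f0 ω‖ ^ (1 - θ) * ‖f1 ω‖ ^ θ) ∧
    r = X0.qnorm f0 ^ (1 - θ) * X1.qnorm f1 ^ θ}

/-- Membership in the Calderón product `X₀^(1-θ) X₁^θ`. -/
def CalMem (X0 X1 : QBFS α μ) (θ : ℝ) (f : α → ℂ) : Prop :=
  AEMeasurable f μ ∧ (calSet X0 X1 θ f).Nonempty

/-- The quasi-norm of the Calderón product `X₀^(1-θ) X₁^θ`. -/
def calNorm (X0 X1 : QBFS α μ) (θ : ℝ) (f : α → ℂ) : ℝ := sInf (calSet X0 X1 θ f)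

/-- Topological separability of a (quasi-normed) function space given by a
membership predicate and a quasi-norm: there is a countable subset which is
dense with respect to the quasi-norm. -/
def SeparableFS (Mem : (α → ℂ) → Prop) (q : (α → ℂ) → ℝ) : Prop :=
  ∃ D : Set (α → ℂ), D.Countable ∧ (∀ d ∈ D, Mem d) ∧
    ∀ f, Mem f → ∀ ε : ℝ, 0 < ε → ∃ d ∈ D, q (f - d) < ε


namespace QBFS

variable (X : QBFS α μ)

lemma mem_zero : X.Mem 0 := by
  obtain ⟨f, hf, -⟩ := X.exists_weak_unit
  have := X.smul_mem 0 f hf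
  simpa using this

lemma qnorm_zero : X.qnorm 0 = 0 := by
  have := X.qnorm_smul 0 0
  simpa using this

lemma mem_neg {f : α → ℂ} (hf : X.Mem f) : X.Mem (-f) := by
  have := X.smul_mem (-1) f hf
  simpa using this

lemma mem_sub {f g : α → ℂ} (hf : X.Mem f) (hg : X.Mem g) : X.Mem (f - g) := by
  rw [sub_eq_add_neg]
  exact X.add_mem f (-g) hf (X.mem_neg hg)

lemma qnorm_neg (f : α → ℂ) : X.qnorm (-f) = X.qnorm f := by
  have := X.qnorm_smul (-1) f
  simpa using this

lemma qnorm_sub_comm (f g : α → ℂ) : X.qnorm (f - g) = X.qnorm (g - f) := by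
  rw [← X.qnorm_neg (f - g), neg_sub]

lemma aemeasurable_absC {f : α → ℂ} (hf : AEMeasurable f μ) :
    AEMeasurable (fun ω => (‖f ω‖ : ℂ)) μ := by
  exact Complex.measurable_ofReal.comp_aemeasurable
    ((continuous_norm.measurable).comp_aemeasurable hf)

lemma abs_absC' (z : ℂ) : ‖((‖z‖ : ℝ) : ℂ)‖ = ‖z‖ := by
  rw [Complex.norm_real, Real.norm_eq_abs, abs_of_nonneg (norm_nonneg _)]

lemma mem_absC {f : α → ℂ} (hf : X.Mem f) : X.Mem (fun ω => (‖f ω‖ : ℂ)) := by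
  refine X.lattice_mem f _ hf (aemeasurable_absC (X.mem_aemeasurable f hf))
    (Eventually.of_forall fun ω => ?_)
  rw [abs_absC']

lemma qnorm_absC {f : α → ℂ} (hf : X.Mem f) :
    X.qnorm (fun ω => (‖f ω‖ : ℂ)) = X.qnorm f := by
  refine le_antisymm ?_ ?_
  · exact X.lattice_qnorm f _ hf (Eventually.of_forall fun ω => by rw [abs_absC'])
  · exact X.lattice_qnorm _ f (X.mem_absC hf) (Eventually.of_forall fun ω => by rw [abs_absC'])

lemma mem_indicator {f : α → ℂ} (hf : X.Mem f) {s : Set α} (hs : MeasurableSet s) :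
    X.Mem (s.indicator f) := by
  refine X.lattice_mem f _ hf ((X.mem_aemeasurable f hf).indicator hs)
    (Eventually.of_forall fun ω => ?_)
  by_cases h : ω ∈ s <;> simp [Set.indicator_of_mem, Set.indicator_of_notMem, h]



/-- Monotone completeness: if a pointwise nondecreasing sequence of real-valued members
is Cauchy in quasi-norm, then it converges in quasi-norm to its pointwise limit. -/
lemma tendsto_qnorm_sub_of_monotone (X : QBFS α μ) (v : ℕ → α → ℝ) (w : α → ℝ)
    (hv : ∀ M, X.Mem (fun ω => (v M ω : ℂ)))
    (hmono : ∀ M M', M ≤ M' → ∀ ω, v M ω ≤ v M' ω)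
    (hw : ∀ ω, Tendsto (fun M => v M ω) atTop (𝓝 (w ω)))
    (hc : ∀ ε : ℝ, 0 < ε → ∃ N, ∀ m ≥ N, ∀ n ≥ N,
      X.qnorm ((fun ω => (v m ω : ℂ)) - fun ω => (v n ω : ℂ)) ≤ ε) :
    Tendsto (fun M => X.qnorm ((fun ω => (w ω : ℂ)) - fun ω => (v M ω : ℂ)))
      atTop (𝓝 0) := by
  set u : ℕ → α → ℂ := fun M ω => (v M ω : ℂ) with hu
  obtain ⟨s, hsMem, hs⟩ := X.complete u hv hc
  have hsAE : AEMeasurable s μ := X.mem_aemeasurable _ hsMem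
  have hvAE : ∀ M, AEMeasurable (fun ω => v M ω) μ := by
    intro M
    have h1 : AEMeasurable (u M) μ := X.mem_aemeasurable _ (hv M)
    have h2 : AEMeasurable (fun ω => (u M ω).re) μ :=
      Complex.measurable_re.comp_aemeasurable h1
    simpa [hu] using h2
  -- pointwise, v M ≤ w (limit of a monotone sequence)
  have hvw : ∀ M ω, v M ω ≤ w ω := by
    intro M ω
    exact ge_of_tendsto (hw ω) (eventually_atTop.2 ⟨M, fun M' hM' => hmono M M' hM' ω⟩)
  -- a.e., v M ≤ Re s
  have key : ∀ M, ∀ᵐ ω ∂μ, v M ω ≤ (s ω).re := by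
    intro M
    set nM : α → ℂ := fun ω => ((max (v M ω - (s ω).re) 0 : ℝ) : ℂ) with hnM
    have hnM_abs : ∀ ω, ‖nM ω‖ = max (v M ω - (s ω).re) 0 := by
      intro ω
      rw [hnM]
      simp only []
      rw [Complex.norm_real, Real.norm_eq_abs, abs_of_nonneg (le_max_right _ _)]
    have hmemdiff : ∀ M', X.Mem (u M' - s) := fun M' => X.mem_sub (hv M') hsMem
    have hnM_le : ∀ M', M ≤ M' → ∀ ω, ‖nM ω‖ ≤ ‖(u M' - s) ω‖ := by
      intro M' hM' ω
      rw [hnM_abs]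
      rcases le_or_gt (v M ω - (s ω).re) 0 with h | h
      · rw [max_eq_right h]; exact norm_nonneg _
      · rw [max_eq_left h.le]
        have h1 : v M ω - (s ω).re ≤ v M' ω - (s ω).re := by
          have := hmono M M' hM' ω; linarith
        have h2 : v M' ω - (s ω).re = ((u M' - s) ω).re := by
          simp [hu, Complex.sub_re]
        calc v M ω - (s ω).re ≤ ((u M' - s) ω).re := by rw [← h2]; exact h1
          _ ≤ |((u M' - s) ω).re| := le_abs_self _
          _ ≤ ‖(u M' - s) ω‖ := Complex.abs_re_le_norm _
    have hnMmem : X.Mem nM := by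
      refine X.lattice_mem (u M - s) nM (hmemdiff M) ?_
        (Eventually.of_forall (hnM_le M le_rfl))
      refine Complex.measurable_ofReal.comp_aemeasurable ?_
      exact ((hvAE M).sub (Complex.measurable_re.comp_aemeasurable hsAE)).max aemeasurable_const
    have hq0 : X.qnorm nM = 0 := by
      by_contra hne
      have hpos : 0 < X.qnorm nM := (X.qnorm_nonneg nM).lt_of_ne (Ne.symm hne)
      obtain ⟨M', hlt, hM'⟩ := ((hs.eventually_lt_const hpos).and (eventually_ge_atTop M)).exists
      have : X.qnorm nM ≤ X.qnorm (u M' - s) :=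
        X.lattice_qnorm (u M' - s) nM (hmemdiff M') (Eventually.of_forall (hnM_le M' hM'))
      exact absurd (this.trans_lt hlt) (lt_irrefl _)
    have := (X.qnorm_eq_zero_iff nM hnMmem).mp hq0
    filter_upwards [this] with ω hω
    have h1 : max (v M ω - (s ω).re) 0 = 0 := by
      have := congrArg Complex.re hω
      simpa [hnM] using this
    have := le_max_left (v M ω - (s ω).re) 0
    rw [h1] at this
    linarith
  have haeall : ∀ᵐ ω ∂μ, ∀ M, v M ω ≤ (s ω).re := (ae_all_iff).2 key
  have hwle : ∀ᵐ ω ∂μ, w ω ≤ (s ω).re := by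
    filter_upwards [haeall] with ω h
    exact le_of_tendsto (hw ω) (Eventually.of_forall h)
  have hbound : ∀ M, X.qnorm ((fun ω => (w ω : ℂ)) - fun ω => (v M ω : ℂ))
      ≤ X.qnorm (u M - s) := by
    intro M
    rw [X.qnorm_sub_comm (u M) s]
    refine X.lattice_qnorm (s - u M) _ (X.mem_sub hsMem (hv M)) ?_
    filter_upwards [hwle] with ω hω
    have h1 : ‖((fun ω => (w ω : ℂ)) - fun ω => (v M ω : ℂ)) ω‖
        = w ω - v M ω := by
      have : ((fun ω => (w ω : ℂ)) - fun ω => (v M ω : ℂ)) ω = ((w ω - v M ω : ℝ) : ℂ) := by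
        simp
      rw [this, Complex.norm_real, Real.norm_eq_abs, abs_of_nonneg (by linarith [hvw M ω])]
    rw [h1]
    have h2 : w ω - v M ω ≤ ((s - u M) ω).re := by
      have : ((s - u M) ω).re = (s ω).re - v M ω := by simp [hu, Complex.sub_re]
      rw [this]; linarith
    calc w ω - v M ω ≤ ((s - u M) ω).re := h2
      _ ≤ |((s - u M) ω).re| := le_abs_self _
      _ ≤ ‖(s - u M) ω‖ := Complex.abs_re_le_norm _
  exact squeeze_zero (fun M => X.qnorm_nonneg _) hbound hs



/-- Order continuity from separability: if `X` is separable and `E n` is a decreasing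
sequence of measurable sets with `f · 1_{E n} → 0` a.e., then `‖f · 1_{E n}‖ → 0`. -/
lemma tendsto_qnorm_indicator (X : QBFS α μ) (hsep : SeparableFS X.Mem X.qnorm)
    (f : α → ℂ) (hf : X.Mem f) (E : ℕ → Set α) (hE : ∀ n, MeasurableSet (E n))
    (hanti : ∀ {n m : ℕ}, n ≤ m → E m ⊆ E n)
    (hae : ∀ᵐ ω ∂μ, Tendsto (fun n => (E n).indicator f ω) atTop (𝓝 0)) :
    Tendsto (fun n => X.qnorm ((E n).indicator f)) atTop (𝓝 0) := by
  classical
  set af : α → ℝ := fun ω => ‖f ω‖ with haf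
  set cf : α → ℂ := fun ω => (‖f ω‖ : ℂ) with hcf
  have hmem_cf : X.Mem cf := X.mem_absC hf
  have coe_ind : ∀ s : Set α, (fun ω => ((s.indicator af ω : ℝ) : ℂ)) = s.indicator cf := by
    intro s; funext ω
    by_cases h : ω ∈ s <;> simp [Set.indicator_of_mem, Set.indicator_of_notMem, h, hcf, haf]
  have hmemind : ∀ s : Set α, MeasurableSet s → X.Mem (s.indicator cf) :=
    fun s hs => X.mem_indicator hmem_cf hs
  have habs_ind_cf : ∀ (s : Set α) ω,
      ‖s.indicator cf ω‖ = ‖s.indicator f ω‖ := by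
    intro s ω
    by_cases h : ω ∈ s <;>
      simp [Set.indicator_of_mem, Set.indicator_of_notMem, h, hcf, abs_absC']
  have hqe : ∀ s : Set α, MeasurableSet s →
      X.qnorm (s.indicator cf) = X.qnorm (s.indicator f) := by
    intro s hs
    refine le_antisymm ?_ ?_
    · exact X.lattice_qnorm _ _ (X.mem_indicator hf hs)
        (Eventually.of_forall fun ω => (habs_ind_cf s ω).le)
    · exact X.lattice_qnorm _ _ (hmemind s hs)
        (Eventually.of_forall fun ω => (habs_ind_cf s ω).ge)
  set a : ℕ → ℝ := fun n => X.qnorm ((E n).indicator f) with ha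
  have hanonneg : ∀ n, 0 ≤ a n := fun n => X.qnorm_nonneg _
  have haanti : ∀ {n m : ℕ}, n ≤ m → a m ≤ a n := by
    intro n m hnm
    refine X.lattice_qnorm _ _ (X.mem_indicator hf (hE n)) (Eventually.of_forall fun ω => ?_)
    by_cases h : ω ∈ E m
    · rw [Set.indicator_of_mem h, Set.indicator_of_mem (hanti hnm h)]
    · rw [Set.indicator_of_notMem h]; simp
  suffices hδ : ∀ δ : ℝ, 0 < δ → ∃ N, a N < δ by
    rw [Metric.tendsto_atTop]
    intro ε hε
    obtain ⟨N, hN⟩ := hδ ε hε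
    exact ⟨N, fun n hn => by
      rw [Real.dist_eq, sub_zero, abs_of_nonneg (hanonneg n)]
      exact lt_of_le_of_lt (haanti hn) hN⟩
  by_contra hcon
  push_neg at hcon
  obtain ⟨δ, hδpos, hδ⟩ := hcon
  -- a.e., f vanishes on the intersection of the E n
  set I : Set α := ⋂ n, E n with hI
  have hI0 : ∀ᵐ ω ∂μ, ω ∈ I → f ω = 0 := by
    filter_upwards [hae] with ω h hω
    have heq : (fun n => (E n).indicator f ω) = fun _ : ℕ => f ω := by
      funext n; exact Set.indicator_of_mem (Set.mem_iInter.mp hω n) f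
    rw [heq] at h
    exact tendsto_nhds_unique tendsto_const_nhds h
  by_cases P : ∀ ε : ℝ, 0 < ε → ∃ N : ℕ, ∀ m n : ℕ, N ≤ n → n ≤ m →
      X.qnorm ((E n \ E m).indicator cf) ≤ ε
  · -- Cauchy case: use monotone completeness
    set v : ℕ → α → ℝ := fun M ω => (E 0 \ E M).indicator af ω with hv
    set w : α → ℝ := fun ω => (E 0 ∩ Iᶜ).indicator af ω with hw
    have hafnn : ∀ ω, 0 ≤ af ω := fun ω => norm_nonneg _
    have hvmem : ∀ M, X.Mem (fun ω => (v M ω : ℂ)) := by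
      intro M
      simp only [hv]
      rw [coe_ind]
      exact hmemind _ ((hE 0).diff (hE M))
    have hvmono : ∀ M M', M ≤ M' → ∀ ω, v M ω ≤ v M' ω := by
      intro M M' hMM' ω
      by_cases h0 : ω ∈ E 0
      · by_cases hM : ω ∈ E M
        · simp only [hv]
          rw [Set.indicator_of_notMem (by simp [hM] : ω ∉ E 0 \ E M)]
          exact Set.indicator_nonneg (fun x _ => hafnn x) _
        · have hM'2 : ω ∉ E M' := fun hc => hM (hanti hMM' hc)
          simp only [hv]
          rw [Set.indicator_of_mem (show ω ∈ E 0 \ E M from ⟨h0, hM⟩), Set.indicator_of_mem (show ω ∈ E 0 \ E M' from ⟨h0, hM'2⟩)]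
      · simp only [hv]
        rw [Set.indicator_of_notMem (fun hc => h0 hc.1),
          Set.indicator_of_notMem (fun hc => h0 hc.1)]
    have hwlim : ∀ ω, Tendsto (fun M => v M ω) atTop (𝓝 (w ω)) := by
      intro ω
      by_cases hι : ω ∈ I
      · have : ∀ M, v M ω = 0 := by
          intro M
          exact Set.indicator_of_notMem (fun hc => hc.2 (Set.mem_iInter.mp hι M)) _
        have hw0 : w ω = 0 := Set.indicator_of_notMem (fun hc => hc.2 hι) _
        rw [hw0]
        simpa [this] using tendsto_const_nhds (α := ℝ) (f := atTop (α := ℕ))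
      · obtain ⟨m0, hm0⟩ : ∃ m0, ω ∉ E m0 := by
          by_contra hc; push_neg at hc; exact hι (Set.mem_iInter.mpr hc)
        refine tendsto_atTop_of_eventually_const (i₀ := m0) fun M hM => ?_
        have hωM : ω ∉ E M := fun hc => hm0 (hanti hM hc)
        by_cases h0 : ω ∈ E 0
        · simp only [hv, hw]
          rw [Set.indicator_of_mem (show ω ∈ E 0 \ E M from ⟨h0, hωM⟩), Set.indicator_of_mem (show ω ∈ E 0 ∩ Iᶜ from ⟨h0, hι⟩)]
        · simp only [hv, hw]
          rw [Set.indicator_of_notMem (fun hc => h0 hc.1),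
            Set.indicator_of_notMem (fun hc => h0 hc.1)]
    have hdiffeq : ∀ m n : ℕ, n ≤ m →
        ((fun ω => (v m ω : ℂ)) - fun ω => (v n ω : ℂ)) = (E n \ E m).indicator cf := by
      intro m n hnm
      funext ω
      have hEm0 : E m ⊆ E 0 := hanti (Nat.zero_le m)
      have hEn0 : E n ⊆ E 0 := hanti (Nat.zero_le n)
      have hEmn : E m ⊆ E n := hanti hnm
      simp only [Pi.sub_apply, hv]
      by_cases h0 : ω ∈ E 0
      · by_cases hm : ω ∈ E m
        · rw [Set.indicator_of_notMem (by simp [hm] : ω ∉ E 0 \ E m),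
            Set.indicator_of_notMem (by simp [hEmn hm] : ω ∉ E 0 \ E n),
            Set.indicator_of_notMem (fun hc : ω ∈ E n \ E m => hc.2 hm)]
          simp
        · by_cases hn : ω ∈ E n
          · rw [Set.indicator_of_mem (show ω ∈ E 0 \ E m from ⟨h0, hm⟩),
              Set.indicator_of_notMem (by simp [hn] : ω ∉ E 0 \ E n),
              Set.indicator_of_mem (show ω ∈ E n \ E m from ⟨hn, hm⟩)]
            simp [hcf, haf]
          · rw [Set.indicator_of_mem (show ω ∈ E 0 \ E m from ⟨h0, hm⟩), Set.indicator_of_mem (show ω ∈ E 0 \ E n from ⟨h0, hn⟩),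
              Set.indicator_of_notMem (fun hc : ω ∈ E n \ E m => hn hc.1)]
            simp
      · rw [Set.indicator_of_notMem (fun hc => h0 hc.1),
          Set.indicator_of_notMem (fun hc => h0 hc.1),
          Set.indicator_of_notMem (fun hc : ω ∈ E n \ E m => h0 (hEn0 hc.1))]
        simp
    have hcauchy : ∀ ε : ℝ, 0 < ε → ∃ N, ∀ m ≥ N, ∀ n ≥ N,
        X.qnorm ((fun ω => (v m ω : ℂ)) - fun ω => (v n ω : ℂ)) ≤ ε := by
      intro ε hε
      obtain ⟨N, hN⟩ := P ε hε
      refine ⟨N, fun m hm n hn => ?_⟩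
      rcases le_total n m with h | h
      · rw [hdiffeq m n h]; exact hN m n hn h
      · have : ((fun ω => (v m ω : ℂ)) - fun ω => (v n ω : ℂ))
            = -(((fun ω => (v n ω : ℂ)) - fun ω => (v m ω : ℂ))) := by ring
        rw [this, X.qnorm_neg, hdiffeq n m h]
        exact hN n m hm h
    have htend := X.tendsto_qnorm_sub_of_monotone v w hvmem hvmono hwlim hcauchy
    -- identify the limit functions
    have hiden : ∀ M, ((fun ω => (w ω : ℂ)) - fun ω => (v M ω : ℂ))
        = (E M ∩ Iᶜ).indicator cf := by
      intro M
      funext ω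
      have hEM0 : E M ⊆ E 0 := hanti (Nat.zero_le M)
      simp only [Pi.sub_apply, hv, hw]
      by_cases h0 : ω ∈ E 0
      · by_cases hι : ω ∈ I
        · have hM : ω ∈ E M := Set.mem_iInter.mp hι M
          rw [Set.indicator_of_notMem (fun hc : ω ∈ E 0 ∩ Iᶜ => hc.2 hι),
            Set.indicator_of_notMem (fun hc : ω ∈ E 0 \ E M => hc.2 hM),
            Set.indicator_of_notMem (fun hc : ω ∈ E M ∩ Iᶜ => hc.2 hι)]
          simp
        · by_cases hM : ω ∈ E M
          · rw [Set.indicator_of_mem (show ω ∈ E 0 ∩ Iᶜ from ⟨h0, hι⟩),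
              Set.indicator_of_notMem (fun hc : ω ∈ E 0 \ E M => hc.2 hM),
              Set.indicator_of_mem (show ω ∈ E M ∩ Iᶜ from ⟨hM, hι⟩)]
            simp [hcf, haf]
          · rw [Set.indicator_of_mem (show ω ∈ E 0 ∩ Iᶜ from ⟨h0, hι⟩), Set.indicator_of_mem (show ω ∈ E 0 \ E M from ⟨h0, hM⟩),
              Set.indicator_of_notMem (fun hc : ω ∈ E M ∩ Iᶜ => hM hc.1)]
            simp
      · rw [Set.indicator_of_notMem (fun hc : ω ∈ E 0 ∩ Iᶜ => h0 hc.1),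
          Set.indicator_of_notMem (fun hc : ω ∈ E 0 \ E M => h0 hc.1),
          Set.indicator_of_notMem (fun hc : ω ∈ E M ∩ Iᶜ => h0 (hEM0 hc.1))]
        simp
    have hcongr : ∀ M, X.qnorm ((E M ∩ Iᶜ).indicator cf) = a M := by
      intro M
      have h1 : (E M ∩ Iᶜ).indicator cf =ᵐ[μ] (E M).indicator cf := by
        filter_upwards [hI0] with ω hω
        by_cases hι : ω ∈ I
        · by_cases hM : ω ∈ E M
          · rw [Set.indicator_of_notMem (fun hc : ω ∈ E M ∩ Iᶜ => hc.2 hι),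
              Set.indicator_of_mem hM]
            simp [hcf, hω hι]
          · rw [Set.indicator_of_notMem (fun hc : ω ∈ E M ∩ Iᶜ => hM hc.1),
              Set.indicator_of_notMem hM]
        · by_cases hM : ω ∈ E M
          · rw [Set.indicator_of_mem (show ω ∈ E M ∩ Iᶜ from ⟨hM, hι⟩), Set.indicator_of_mem hM]
          · rw [Set.indicator_of_notMem (fun hc : ω ∈ E M ∩ Iᶜ => hM hc.1),
              Set.indicator_of_notMem hM]
      rw [X.qnorm_congr _ _ h1, hqe _ (hE M)]
    have htend2 : Tendsto a atTop (𝓝 0) := by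
      refine htend.congr fun M => ?_
      rw [hiden M, hcongr M]
    obtain ⟨M, hM⟩ := (htend2.eventually_lt_const hδpos).exists
    exact absurd (hδ M) (not_le.mpr hM)
  · -- disjointification case: contradict separability
    push_neg at P
    obtain ⟨ε, hεpos, hP⟩ := P
    have next : ∀ N : ℕ, ∃ p : ℕ × ℕ, N ≤ p.2 ∧ p.2 ≤ p.1 ∧
        ε < X.qnorm ((E p.2 \ E p.1).indicator cf) := by
      intro N
      obtain ⟨m, n, hn, hnm, hq⟩ := hP N
      exact ⟨(m, n), hn, hnm, hq⟩
    set c : ℕ → ℕ × ℕ := fun N => (next N).choose with hc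
    set pr : ℕ → ℕ × ℕ := fun k => Nat.rec (c 0) (fun _ q => c (q.1 + 1)) k with hpr
    set nn : ℕ → ℕ := fun k => (pr k).2 with hnn
    set mm : ℕ → ℕ := fun k => (pr k).1 with hmm
    have hspec : ∀ k, nn k ≤ mm k ∧ ε < X.qnorm ((E (nn k) \ E (mm k)).indicator cf) := by
      intro k
      cases k with
      | zero => exact ⟨((next 0).choose_spec).2.1, ((next 0).choose_spec).2.2⟩
      | succ j =>
        have heq : pr (j+1) = c (mm j + 1) := rfl
        simp only [hnn, hmm]
        rw [heq]
        exact ⟨((next (mm j + 1)).choose_spec).2.1, ((next (mm j + 1)).choose_spec).2.2⟩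
    have hstep : ∀ j, mm j < nn (j + 1) := by
      intro j
      have heq : pr (j+1) = c (mm j + 1) := rfl
      have h1 : mm j + 1 ≤ nn (j+1) := by
        simp only [hnn]; rw [heq]; exact ((next (mm j + 1)).choose_spec).1
      omega
    have hjk : ∀ j k, j < k → mm j < nn k := by
      intro j k hjkk
      induction k with
      | zero => omega
      | succ k ih =>
        rcases Nat.lt_succ_iff_lt_or_eq.mp hjkk with h | h
        · have h1 := ih h
          have h2 := (hspec k).1
          have h3 := hstep k
          omega
        · subst h; exact hstep j
    set R : ℕ → Set α := fun k => E (nn k) \ E (mm k) with hR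
    have hRdisj : ∀ j k, j < k → ∀ ω, ω ∈ R k → ω ∉ R j := by
      intro j k hjkk ω hωk hωj
      have h1 : E (nn k) ⊆ E (mm j) := hanti (le_of_lt (hjk j k hjkk))
      exact hωj.2 (h1 hωk.1)
    set U : Set ℕ → Set α := fun A => ⋃ k ∈ A, R k with hU
    have hUmeas : ∀ A : Set ℕ, MeasurableSet (U A) := by
      intro A
      exact MeasurableSet.biUnion (Set.to_countable A)
        (fun k _ => (hE (nn k)).diff (hE (mm k)))
    set uu : Set ℕ → α → ℂ := fun A => (U A).indicator cf with huu
    have humem : ∀ A, X.Mem (uu A) := fun A => hmemind _ (hUmeas A)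
    have hRsep : ∀ A B : Set ℕ, ∀ k0, k0 ∈ A → k0 ∉ B →
        ε < X.qnorm (uu A - uu B) := by
      intro A B k0 hk0A hk0B
      have hmemAB : X.Mem (uu A - uu B) := X.mem_sub (humem A) (humem B)
      refine lt_of_lt_of_le (hspec k0).2 (X.lattice_qnorm _ _ hmemAB
        (Eventually.of_forall fun ω => ?_))
      by_cases h : ω ∈ R k0
      · have hUA : ω ∈ U A := Set.mem_biUnion hk0A h
        have hUB : ω ∉ U B := by
          intro hc
          obtain ⟨j, hjB, hωj⟩ := Set.mem_iUnion₂.mp hc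
          rcases lt_trichotomy j k0 with hlt | heq | hgt
          · exact hRdisj j k0 hlt ω h hωj
          · exact hk0B (heq ▸ hjB)
          · exact hRdisj k0 j hgt ω hωj h
        rw [Set.indicator_of_mem h]
        simp only [Pi.sub_apply, huu]
        rw [Set.indicator_of_mem hUA, Set.indicator_of_notMem hUB, sub_zero]
      · rw [Set.indicator_of_notMem h]
        simp
    obtain ⟨D, hDc, hDmem, hDdense⟩ := hsep
    have hCq0 : (0:ℝ) < X.Cq := lt_of_lt_of_le one_pos X.one_le_Cq
    have hηpos : 0 < ε / (2 * X.Cq) := by positivity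
    have hchoice : ∀ A : Set ℕ, ∃ d ∈ D, X.qnorm (uu A - d) < ε / (2 * X.Cq) :=
      fun A => hDdense (uu A) (humem A) _ hηpos
    set φ : Set ℕ → (α → ℂ) := fun A => (hchoice A).choose with hφ
    have hφD : ∀ A, φ A ∈ D := fun A => (hchoice A).choose_spec.1
    have hφq : ∀ A, X.qnorm (uu A - φ A) < ε / (2 * X.Cq) :=
      fun A => (hchoice A).choose_spec.2
    have hinj : Function.Injective φ := by
      intro A B hAB
      by_contra hne
      obtain ⟨k0, hk0⟩ : ∃ k0, ¬(k0 ∈ A ↔ k0 ∈ B) := by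
        by_contra hc; push_neg at hc
        exact hne (Set.ext fun k => hc k)
      have hsep2 : ε < X.qnorm (uu A - uu B) := by
        by_cases h1 : k0 ∈ A
        · have h2 : k0 ∉ B := fun hc => hk0 ⟨fun _ => hc, fun _ => h1⟩
          exact hRsep A B k0 h1 h2
        · have h2 : k0 ∈ B := by
            by_contra hc; exact hk0 ⟨fun h => absurd h h1, fun h => absurd h hc⟩
          rw [X.qnorm_sub_comm]
          exact hRsep B A k0 h2 h1
      set d := φ A with hd
      have hsplit : (uu A - d) + (d - uu B) = uu A - uu B := sub_add_sub_cancel _ _ _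
      have hmem1 : X.Mem (uu A - d) := X.mem_sub (humem A) (hDmem d (hφD A))
      have hmem2 : X.Mem (d - uu B) := X.mem_sub (hDmem d (hφD A)) (humem B)
      have htri : X.qnorm (uu A - uu B) ≤ X.Cq * (X.qnorm (uu A - d) + X.qnorm (d - uu B)) := by
        rw [← hsplit]; exact X.qnorm_add_le _ _ hmem1 hmem2
      have h2 : X.qnorm (d - uu B) < ε / (2 * X.Cq) := by
        rw [X.qnorm_sub_comm]
        have : d = φ B := hAB ▸ hd
        rw [this]
        exact hφq B
      have h1 := hφq A
      have : X.Cq * (X.qnorm (uu A - d) + X.qnorm (d - uu B)) < ε := by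
        have hlt : X.qnorm (uu A - d) + X.qnorm (d - uu B) < 2 * (ε / (2 * X.Cq)) := by
          linarith
        calc X.Cq * (X.qnorm (uu A - d) + X.qnorm (d - uu B))
            < X.Cq * (2 * (ε / (2 * X.Cq))) := by
              exact mul_lt_mul_of_pos_left hlt hCq0
          _ = ε := by field_simp
      linarith [hsep2, htri]
    obtain ⟨enc, henc⟩ := Set.countable_iff_exists_injective.mp hDc
    exact Function.cantor_injective (fun A : Set ℕ => enc ⟨φ A, hφD A⟩)
      (fun A B hAB => hinj (Subtype.mk_eq_mk.mp (henc hAB)))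

end QBFS

section Product

lemma rpow_split {θ : ℝ} (hθ1 : θ < 1) {x : ℝ} (hx : 0 ≤ x) :
    x ^ (1 - θ) * x ^ θ = x := by
  have h1 : (1 - θ) + θ ≠ 0 := by norm_num
  have := Real.rpow_add' hx h1
  rw [show (1 - θ) + θ = (1:ℝ) by ring, Real.rpow_one] at this
  exact this.symm

lemma two_point_holder {θ : ℝ} (hθ0 : 0 < θ) (hθ1 : θ < 1) {a b c d : ℝ}
    (ha : 0 ≤ a) (hb : 0 ≤ b) (hc : 0 ≤ c) (hd : 0 ≤ d) :
    a ^ (1 - θ) * b ^ θ + c ^ (1 - θ) * d ^ θ ≤ (a + c) ^ (1 - θ) * (b + d) ^ θ := by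
  have hθ1' : (0:ℝ) < 1 - θ := by linarith
  by_cases hac : a + c = 0
  · obtain ⟨ha0, hc0⟩ := (add_eq_zero_iff_of_nonneg ha hc).mp hac
    rw [ha0, hc0]
    simp [Real.zero_rpow (ne_of_gt hθ1')]
  by_cases hbd : b + d = 0
  · obtain ⟨hb0, hd0⟩ := (add_eq_zero_iff_of_nonneg hb hd).mp hbd
    rw [hb0, hd0]
    simp [Real.zero_rpow (ne_of_gt hθ0)]
  have hA : (0:ℝ) < a + c := (add_nonneg ha hc).lt_of_ne (Ne.symm hac)
  have hB : (0:ℝ) < b + d := (add_nonneg hb hd).lt_of_ne (Ne.symm hbd)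
  have hApow : (0:ℝ) < (a + c) ^ (1 - θ) := Real.rpow_pos_of_pos hA _
  have hBpow : (0:ℝ) < (b + d) ^ θ := Real.rpow_pos_of_pos hB _
  have key1 := Real.geom_mean_le_arith_mean2_weighted (le_of_lt hθ1') hθ0.le
    (div_nonneg ha hA.le) (div_nonneg hb hB.le) (by ring)
  have key2 := Real.geom_mean_le_arith_mean2_weighted (le_of_lt hθ1') hθ0.le
    (div_nonneg hc hA.le) (div_nonneg hd hB.le) (by ring)
  have e1 : a ^ (1 - θ) * b ^ θ
      = ((a / (a + c)) ^ (1 - θ) * (b / (b + d)) ^ θ) * ((a + c) ^ (1 - θ) * (b + d) ^ θ) := by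
    rw [Real.div_rpow ha hA.le, Real.div_rpow hb hB.le]
    field_simp
  have e2 : c ^ (1 - θ) * d ^ θ
      = ((c / (a + c)) ^ (1 - θ) * (d / (b + d)) ^ θ) * ((a + c) ^ (1 - θ) * (b + d) ^ θ) := by
    rw [Real.div_rpow hc hA.le, Real.div_rpow hd hB.le]
    field_simp
  rw [e1, e2, ← add_mul]
  have hsum : (a / (a + c)) ^ (1 - θ) * (b / (b + d)) ^ θ
      + (c / (a + c)) ^ (1 - θ) * (d / (b + d)) ^ θ ≤ 1 := by
    have h12 := add_le_add key1 key2
    have heq : (1 - θ) * (a / (a + c)) + θ * (b / (b + d))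
        + ((1 - θ) * (c / (a + c)) + θ * (d / (b + d))) = 1 := by
      field_simp
      ring
    linarith
  calc ((a / (a + c)) ^ (1 - θ) * (b / (b + d)) ^ θ
        + (c / (a + c)) ^ (1 - θ) * (d / (b + d)) ^ θ) * ((a + c) ^ (1 - θ) * (b + d) ^ θ)
      ≤ 1 * ((a + c) ^ (1 - θ) * (b + d) ^ θ) :=
        mul_le_mul_of_nonneg_right hsum (by positivity)
    _ = (a + c) ^ (1 - θ) * (b + d) ^ θ := one_mul _

variable {α : Type*} [MeasurableSpace α] {μ : MeasureTheory.Measure α}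

lemma calSet_bddBelow (X0 X1 : QBFS α μ) (θ : ℝ) (f : α → ℂ) :
    BddBelow (calSet X0 X1 θ f) := by
  refine ⟨0, fun r hr => ?_⟩
  obtain ⟨f0, f1, -, -, -, rfl⟩ := hr
  exact mul_nonneg (Real.rpow_nonneg (X0.qnorm_nonneg _) _)
    (Real.rpow_nonneg (X1.qnorm_nonneg _) _)

/-- Sum estimate for the Calderón quasi-norm from explicit balanced factorizations. -/
lemma calNorm_add_le_of_parts (X0 X1 : QBFS α μ) {θ : ℝ} (hθ0 : 0 < θ) (hθ1 : θ < 1)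
    {φ ψ p0 p1 q0 q1 : α → ℂ} {t1 t2 : ℝ}
    (hp0 : X0.Mem p0) (hp1 : X1.Mem p1) (hq0 : X0.Mem q0) (hq1 : X1.Mem q1)
    (hdφ : ∀ᵐ ω ∂μ, ‖φ ω‖ ≤
      ‖p0 ω‖ ^ (1 - θ) * ‖p1 ω‖ ^ θ)
    (hdψ : ∀ᵐ ω ∂μ, ‖ψ ω‖ ≤
      ‖q0 ω‖ ^ (1 - θ) * ‖q1 ω‖ ^ θ)
    (h1 : X0.qnorm p0 ≤ t1) (h2 : X1.qnorm p1 ≤ t1)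
    (h3 : X0.qnorm q0 ≤ t2) (h4 : X1.qnorm q1 ≤ t2) :
    calNorm X0 X1 θ (φ + ψ) ≤ X0.Cq ^ (1 - θ) * X1.Cq ^ θ * (t1 + t2) := by
  have ht1 : 0 ≤ t1 := le_trans (X0.qnorm_nonneg p0) h1
  have ht2 : 0 ≤ t2 := le_trans (X0.qnorm_nonneg q0) h3
  have hC0 : (0:ℝ) ≤ X0.Cq := le_trans zero_le_one X0.one_le_Cq
  have hC1 : (0:ℝ) ≤ X1.Cq := le_trans zero_le_one X1.one_le_Cq
  set F0 : α → ℂ := fun ω => ((‖p0 ω‖ + ‖q0 ω‖ : ℝ) : ℂ) with hF0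
  set F1 : α → ℂ := fun ω => ((‖p1 ω‖ + ‖q1 ω‖ : ℝ) : ℂ) with hF1
  have hF0eq : F0 = (fun ω => (‖p0 ω‖ : ℂ)) + fun ω => (‖q0 ω‖ : ℂ) := by
    funext ω; simp [hF0]
  have hF1eq : F1 = (fun ω => (‖p1 ω‖ : ℂ)) + fun ω => (‖q1 ω‖ : ℂ) := by
    funext ω; simp [hF1]
  have hF0mem : X0.Mem F0 := by
    rw [hF0eq]; exact X0.add_mem _ _ (X0.mem_absC hp0) (X0.mem_absC hq0)
  have hF1mem : X1.Mem F1 := by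
    rw [hF1eq]; exact X1.add_mem _ _ (X1.mem_absC hp1) (X1.mem_absC hq1)
  have hF0q : X0.qnorm F0 ≤ X0.Cq * (t1 + t2) := by
    rw [hF0eq]
    calc X0.qnorm _ ≤ X0.Cq * (X0.qnorm (fun ω => (‖p0 ω‖ : ℂ))
          + X0.qnorm fun ω => (‖q0 ω‖ : ℂ)) :=
        X0.qnorm_add_le _ _ (X0.mem_absC hp0) (X0.mem_absC hq0)
      _ = X0.Cq * (X0.qnorm p0 + X0.qnorm q0) := by rw [X0.qnorm_absC hp0, X0.qnorm_absC hq0]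
      _ ≤ X0.Cq * (t1 + t2) := mul_le_mul_of_nonneg_left (add_le_add h1 h3) hC0
  have hF1q : X1.qnorm F1 ≤ X1.Cq * (t1 + t2) := by
    rw [hF1eq]
    calc X1.qnorm _ ≤ X1.Cq * (X1.qnorm (fun ω => (‖p1 ω‖ : ℂ))
          + X1.qnorm fun ω => (‖q1 ω‖ : ℂ)) :=
        X1.qnorm_add_le _ _ (X1.mem_absC hp1) (X1.mem_absC hq1)
      _ = X1.Cq * (X1.qnorm p1 + X1.qnorm q1) := by rw [X1.qnorm_absC hp1, X1.qnorm_absC hq1]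
      _ ≤ X1.Cq * (t1 + t2) := mul_le_mul_of_nonneg_left (add_le_add h2 h4) hC1
  have hdom : ∀ᵐ ω ∂μ, ‖(φ + ψ) ω‖ ≤
      ‖F0 ω‖ ^ (1 - θ) * ‖F1 ω‖ ^ θ := by
    filter_upwards [hdφ, hdψ] with ω h1' h2'
    have hF0abs : ‖F0 ω‖ = ‖p0 ω‖ + ‖q0 ω‖ := by
      rw [hF0]
      simp only []
      rw [Complex.norm_real, Real.norm_eq_abs, abs_of_nonneg (add_nonneg (norm_nonneg _)
        (norm_nonneg _))]
    have hF1abs : ‖F1 ω‖ = ‖p1 ω‖ + ‖q1 ω‖ := by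
      rw [hF1]
      simp only []
      rw [Complex.norm_real, Real.norm_eq_abs, abs_of_nonneg (add_nonneg (norm_nonneg _)
        (norm_nonneg _))]
    rw [hF0abs, hF1abs]
    calc ‖(φ + ψ) ω‖ ≤ ‖φ ω‖ + ‖ψ ω‖ :=
        norm_add_le _ _
      _ ≤ ‖p0 ω‖ ^ (1 - θ) * ‖p1 ω‖ ^ θ
          + ‖q0 ω‖ ^ (1 - θ) * ‖q1 ω‖ ^ θ := add_le_add h1' h2'
      _ ≤ _ := two_point_holder hθ0 hθ1 (norm_nonneg _) (norm_nonneg _)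
          (norm_nonneg _) (norm_nonneg _)
  have hmemSet : X0.qnorm F0 ^ (1 - θ) * X1.qnorm F1 ^ θ ∈ calSet X0 X1 θ (φ + ψ) :=
    ⟨F0, F1, hF0mem, hF1mem, hdom, rfl⟩
  calc calNorm X0 X1 θ (φ + ψ) ≤ X0.qnorm F0 ^ (1 - θ) * X1.qnorm F1 ^ θ :=
      csInf_le (calSet_bddBelow X0 X1 θ _) hmemSet
    _ ≤ (X0.Cq * (t1 + t2)) ^ (1 - θ) * (X1.Cq * (t1 + t2)) ^ θ := by
        refine mul_le_mul ?_ ?_ (Real.rpow_nonneg (X1.qnorm_nonneg _) _)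
          (Real.rpow_nonneg (mul_nonneg hC0 (by positivity)) _)
        · exact Real.rpow_le_rpow (X0.qnorm_nonneg _) hF0q (by linarith)
        · exact Real.rpow_le_rpow (X1.qnorm_nonneg _) hF1q (by linarith)
    _ = X0.Cq ^ (1 - θ) * X1.Cq ^ θ * (t1 + t2) := by
        rw [Real.mul_rpow hC0 (by positivity), Real.mul_rpow hC1 (by positivity)]
        have := rpow_split hθ1 (show (0:ℝ) ≤ t1 + t2 by positivity)
        calc X0.Cq ^ (1 - θ) * (t1 + t2) ^ (1 - θ) * (X1.Cq ^ θ * (t1 + t2) ^ θ)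
            = X0.Cq ^ (1 - θ) * X1.Cq ^ θ * ((t1 + t2) ^ (1 - θ) * (t1 + t2) ^ θ) := by ring
          _ = X0.Cq ^ (1 - θ) * X1.Cq ^ θ * (t1 + t2) := by rw [this]

/-- A countable set in `X₀ ∩ X₁` approximating simultaneously in both quasi-norms. -/
lemma exists_joint_dense (X0 X1 : QBFS α μ)
    (h0 : SeparableFS X0.Mem X0.qnorm) (h1 : SeparableFS X1.Mem X1.qnorm) :
    ∃ T : Set (α → ℂ), T.Countable ∧ (∀ t ∈ T, X0.Mem t ∧ X1.Mem t) ∧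
      ∀ g, X0.Mem g → X1.Mem g → ∀ η : ℝ, 0 < η →
        ∃ t ∈ T, X0.qnorm (g - t) < η ∧ X1.qnorm (g - t) < η := by
  classical
  obtain ⟨D0, hD0c, hD0m, hD0d⟩ := h0
  obtain ⟨D1, hD1c, hD1m, hD1d⟩ := h1
  set Q : (α → ℂ) → (α → ℂ) → ℕ → (α → ℂ) → Prop := fun d0 d1 k t =>
    (X0.Mem t ∧ X1.Mem t) ∧ X0.qnorm (t - d0) < 1 / (k + 1) ∧
      X1.qnorm (t - d1) < 1 / (k + 1) with hQ
  set pick : (α → ℂ) → (α → ℂ) → ℕ → (α → ℂ) := fun d0 d1 k =>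
    if h : ∃ t, Q d0 d1 k t then h.choose else 0 with hpick
  refine ⟨(fun x : (α → ℂ) × (α → ℂ) × ℕ => pick x.1 x.2.1 x.2.2) ''
    (D0 ×ˢ D1 ×ˢ (Set.univ : Set ℕ)), ?_, ?_, ?_⟩
  · exact (hD0c.prod (hD1c.prod Set.countable_univ)).image _
  · rintro t ⟨⟨d0, d1, k⟩, -, rfl⟩
    simp only [hpick]
    split_ifs with h
    · exact h.choose_spec.1
    · exact ⟨X0.mem_zero, X1.mem_zero⟩
  · intro g hg0 hg1 η hη
    set C : ℝ := max X0.Cq X1.Cq with hC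
    have hC1 : (1:ℝ) ≤ C := le_trans X0.one_le_Cq (le_max_left _ _)
    have hCpos : (0:ℝ) < C := lt_of_lt_of_le one_pos hC1
    obtain ⟨k, hk⟩ := exists_nat_one_div_lt (show (0:ℝ) < η / (2 * C) by positivity)
    have hkpos : (0:ℝ) < 1 / (k + 1) := by positivity
    obtain ⟨d0, hd0D, hd0⟩ := hD0d g hg0 _ hkpos
    obtain ⟨d1, hd1D, hd1⟩ := hD1d g hg1 _ hkpos
    have hex : ∃ t, Q d0 d1 k t := ⟨g, ⟨hg0, hg1⟩, hd0, hd1⟩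
    refine ⟨pick d0 d1 k, ⟨(d0, d1, k), by simp [hd0D, hd1D], rfl⟩, ?_⟩
    have hspec := hex.choose_spec
    have hpk : pick d0 d1 k = hex.choose := by rw [hpick]; simp only [dif_pos hex]
    rw [hpk]
    obtain ⟨⟨ht0, ht1⟩, htq0, htq1⟩ := hspec
    set t := hex.choose
    have key : ∀ (X : QBFS α μ), X.Mem g → X.Mem t → X.Mem d0 →
        X.qnorm (g - d0) < 1 / (k + 1) → X.qnorm (t - d0) < 1 / (k + 1) →
        X.Cq ≤ C → X.qnorm (g - t) < η := by
      intro X hXg hXt hXd hq1 hq2 hXC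
      have hsplit : (g - d0) + (d0 - t) = g - t := sub_add_sub_cancel _ _ _
      have h1' : X.qnorm (g - t) ≤ X.Cq * (X.qnorm (g - d0) + X.qnorm (d0 - t)) := by
        rw [← hsplit]
        exact X.qnorm_add_le _ _ (X.mem_sub hXg hXd) (X.mem_sub hXd hXt)
      have h2' : X.qnorm (d0 - t) = X.qnorm (t - d0) := X.qnorm_sub_comm _ _
      have h3' : X.qnorm (g - d0) + X.qnorm (d0 - t) < 2 * (1 / (k + 1)) := by
        rw [h2']; linarith
      have h4' : X.qnorm (g - t) ≤ C * (X.qnorm (g - d0) + X.qnorm (d0 - t)) := by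
        refine le_trans h1' (mul_le_mul_of_nonneg_right hXC
          (add_nonneg (X.qnorm_nonneg _) (X.qnorm_nonneg _)))
      have h5' : C * (X.qnorm (g - d0) + X.qnorm (d0 - t)) < C * (2 * (1 / (k + 1))) :=
        mul_lt_mul_of_pos_left h3' hCpos
      have h6' : C * (2 * (1 / (k + 1))) < C * (2 * (η / (2 * C))) := by
        have := mul_lt_mul_of_pos_left hk (show (0:ℝ) < 2 * C by positivity)
        nlinarith
      have h7' : C * (2 * (η / (2 * C))) = η := by field_simp
      linarith
    constructor
    · exact key X0 hg0 ht0 (hD0m d0 hd0D) hd0 htq0 (le_max_left _ _)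
    · -- same with d1 for X1
      have hsplit : (g - d1) + (d1 - t) = g - t := sub_add_sub_cancel _ _ _
      have h1' : X1.qnorm (g - t) ≤ X1.Cq * (X1.qnorm (g - d1) + X1.qnorm (d1 - t)) := by
        rw [← hsplit]
        exact X1.qnorm_add_le _ _ (X1.mem_sub hg1 (hD1m d1 hd1D))
          (X1.mem_sub (hD1m d1 hd1D) ht1)
      have h2' : X1.qnorm (d1 - t) = X1.qnorm (t - d1) := X1.qnorm_sub_comm _ _
      have h3' : X1.qnorm (g - d1) + X1.qnorm (d1 - t) < 2 * (1 / (k + 1)) := by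
        rw [h2']; linarith
      have h4' : X1.qnorm (g - t) ≤ C * (X1.qnorm (g - d1) + X1.qnorm (d1 - t)) := by
        refine le_trans h1' (mul_le_mul_of_nonneg_right (le_max_right _ _)
          (add_nonneg (X1.qnorm_nonneg _) (X1.qnorm_nonneg _)))
      have h5' : C * (X1.qnorm (g - d1) + X1.qnorm (d1 - t)) < C * (2 * (1 / (k + 1))) :=
        mul_lt_mul_of_pos_left h3' hCpos
      have h6' : C * (2 * (1 / (k + 1))) < C * (2 * (η / (2 * C))) := by
        have := mul_lt_mul_of_pos_left hk (show (0:ℝ) < 2 * C by positivity)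
        nlinarith
      have h7' : C * (2 * (η / (2 * C))) = η := by field_simp
      linarith

end Product


/-- If both `X₀` and `X₁` are separable quasi-Banach function spaces, then the
Calderón product `X₀^(1-θ) X₁^θ` is separable. -/
theorem calderon_product_separable (X0 X1 : QBFS α μ) (θ : ℝ)
    (hθ : θ ∈ Set.Ioo (0 : ℝ) 1)
    (h0 : SeparableFS X0.Mem X0.qnorm) (h1 : SeparableFS X1.Mem X1.qnorm) :
    SeparableFS (CalMem X0 X1 θ) (calNorm X0 X1 θ) := by
  classical
  obtain ⟨hθ0, hθ1⟩ := hθ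
  have hθ1' : (0:ℝ) < 1 - θ := by linarith
  obtain ⟨T, hTc, hTmem, hTd⟩ := exists_joint_dense X0 X1 h0 h1
  refine ⟨T, hTc, ?_, ?_⟩
  · intro d hd
    obtain ⟨hd0, hd1⟩ := hTmem d hd
    exact ⟨X0.mem_aemeasurable d hd0,
      ⟨X0.qnorm d ^ (1 - θ) * X1.qnorm d ^ θ, d, d, hd0, hd1,
        Eventually.of_forall (fun ω =>
          (rpow_split hθ1 (norm_nonneg _)).symm.le), rfl⟩⟩
  · intro f hf ε hε
    set K : ℝ := X0.Cq ^ (1 - θ) * X1.Cq ^ θ with hK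
    have hC0pos : (0:ℝ) < X0.Cq := lt_of_lt_of_le one_pos X0.one_le_Cq
    have hC1pos : (0:ℝ) < X1.Cq := lt_of_lt_of_le one_pos X1.one_le_Cq
    have hKpos : 0 < K :=
      mul_pos (Real.rpow_pos_of_pos hC0pos _) (Real.rpow_pos_of_pos hC1pos _)
    set ε2 : ℝ := ε / (4 * K) with hε2
    have hε2pos : 0 < ε2 := by positivity
    obtain ⟨hfmeas, r, hr⟩ := hf
    obtain ⟨f0, f1, hm0, hm1, hdom, -⟩ := hr
    have hae0 : AEMeasurable f0 μ := X0.mem_aemeasurable _ hm0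
    have hae1 : AEMeasurable f1 μ := X1.mem_aemeasurable _ hm1
    set F0 := hae0.mk f0 with hF0
    set F1 := hae1.mk f1 with hF1
    have hF0meas : Measurable F0 := hae0.measurable_mk
    have hF1meas : Measurable F1 := hae1.measurable_mk
    have hF0ae : f0 =ᵐ[μ] F0 := hae0.ae_eq_mk
    have hF1ae : f1 =ᵐ[μ] F1 := hae1.ae_eq_mk
    have habs0 : Measurable fun ω => ‖F0 ω‖ :=
      continuous_norm.measurable.comp hF0meas
    have habs1 : Measurable fun ω => ‖F1 ω‖ :=
      continuous_norm.measurable.comp hF1meas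
    set S : Set α := (F0 ⁻¹' {0})ᶜ ∩ (F1 ⁻¹' {0})ᶜ with hS
    have hSmeas : MeasurableSet S :=
      ((hF0meas (measurableSet_singleton 0)).compl).inter
        ((hF1meas (measurableSet_singleton 0)).compl)
    have hSmem : ∀ ω, ω ∈ S ↔ F0 ω ≠ 0 ∧ F1 ω ≠ 0 := by
      intro ω
      simp [hS, Set.mem_inter_iff]
    set G0 : α → ℂ := S.indicator F0 with hG0
    set G1 : α → ℂ := S.indicator F1 with hG1
    have hG0mem : X0.Mem G0 := X0.mem_indicator (X0.mem_congr f0 F0 hm0 hF0ae) hSmeas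
    have hG1mem : X1.Mem G1 := X1.mem_indicator (X1.mem_congr f1 F1 hm1 hF1ae) hSmeas
    set E : ℕ → Set α := fun n =>
      {ω | (n : ℝ) * ‖F1 ω‖ < ‖F0 ω‖} ∪
      {ω | (n : ℝ) * ‖F0 ω‖ < ‖F1 ω‖} with hE
    have hEmeas : ∀ n, MeasurableSet (E n) := by
      intro n
      exact (measurableSet_lt (habs1.const_mul _) habs0).union
        (measurableSet_lt (habs0.const_mul _) habs1)
    have hEanti : ∀ {n m : ℕ}, n ≤ m → E m ⊆ E n := by
      intro n m hnm ω hω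
      have hcast : (n : ℝ) ≤ m := Nat.cast_le.mpr hnm
      simp only [hE, Set.mem_union, Set.mem_setOf_eq] at hω ⊢
      rcases hω with h | h
      · exact Or.inl (lt_of_le_of_lt
          (mul_le_mul_of_nonneg_right hcast (norm_nonneg _)) h)
      · exact Or.inr (lt_of_le_of_lt
          (mul_le_mul_of_nonneg_right hcast (norm_nonneg _)) h)
    have hdomG : ∀ᵐ ω ∂μ, ‖f ω‖ ≤
        ‖G0 ω‖ ^ (1 - θ) * ‖G1 ω‖ ^ θ := by
      filter_upwards [hdom, hF0ae, hF1ae] with ω hω h0ω h1ω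
      rw [h0ω, h1ω] at hω
      by_cases hωS : ω ∈ S
      · rw [hG0, hG1, Set.indicator_of_mem hωS, Set.indicator_of_mem hωS]
        exact hω
      · have hFzero : ‖F0 ω‖ ^ (1 - θ) * ‖F1 ω‖ ^ θ = 0 := by
          by_cases hF0z : F0 ω = 0
          · rw [hF0z]
            simp [Real.zero_rpow (ne_of_gt hθ1')]
          · have hF1z : F1 ω = 0 := by
              by_contra hc
              exact hωS ((hSmem ω).mpr ⟨hF0z, hc⟩)
            rw [hF1z]
            simp [Real.zero_rpow (ne_of_gt hθ0)]
        have hGzero : ‖G0 ω‖ ^ (1 - θ) * ‖G1 ω‖ ^ θ = 0 := by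
          rw [hG0, hG1, Set.indicator_of_notMem hωS, Set.indicator_of_notMem hωS]
          simp [Real.zero_rpow (ne_of_gt hθ0)]
        exact le_trans hω (le_of_eq (hFzero.trans hGzero.symm))
    -- pointwise convergence of the indicators to zero
    have hzero0 : ∀ ω, Tendsto (fun n => (E n).indicator G0 ω) atTop (𝓝 0) := by
      intro ω
      by_cases hωS : ω ∈ S
      · have h0pos : 0 < ‖F0 ω‖ := norm_pos_iff.mpr ((hSmem ω).mp hωS).1
        have h1pos : 0 < ‖F1 ω‖ := norm_pos_iff.mpr ((hSmem ω).mp hωS).2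
        obtain ⟨N, hN⟩ := exists_nat_gt (‖F0 ω‖ / ‖F1 ω‖
          ⊔ ‖F1 ω‖ / ‖F0 ω‖)
        refine tendsto_atTop_of_eventually_const (i₀ := N) fun n hn => ?_
        have hNn : (N : ℝ) ≤ n := Nat.cast_le.mpr hn
        have hωE : ω ∉ E n := by
          intro hc
          simp only [hE, Set.mem_union, Set.mem_setOf_eq] at hc
          rcases hc with h | h
          · have h1 : ‖F0 ω‖ / ‖F1 ω‖ < N :=
              lt_of_le_of_lt (le_max_left _ _) hN
            have h2 : ‖F0 ω‖ < N * ‖F1 ω‖ :=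
              (div_lt_iff₀ h1pos).mp h1
            nlinarith
          · have h1 : ‖F1 ω‖ / ‖F0 ω‖ < N :=
              lt_of_le_of_lt (le_max_right _ _) hN
            have h2 : ‖F1 ω‖ < N * ‖F0 ω‖ :=
              (div_lt_iff₀ h0pos).mp h1
            nlinarith
        exact Set.indicator_of_notMem hωE _
      · refine tendsto_atTop_of_eventually_const (i₀ := 0) fun n _ => ?_
        by_cases hωE : ω ∈ E n
        · rw [Set.indicator_of_mem hωE, hG0]
          exact Set.indicator_of_notMem hωS F0
        · exact Set.indicator_of_notMem hωE _
    have hzero1 : ∀ ω, Tendsto (fun n => (E n).indicator G1 ω) atTop (𝓝 0) := by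
      intro ω
      by_cases hωS : ω ∈ S
      · have h0pos : 0 < ‖F0 ω‖ := norm_pos_iff.mpr ((hSmem ω).mp hωS).1
        have h1pos : 0 < ‖F1 ω‖ := norm_pos_iff.mpr ((hSmem ω).mp hωS).2
        obtain ⟨N, hN⟩ := exists_nat_gt (‖F0 ω‖ / ‖F1 ω‖
          ⊔ ‖F1 ω‖ / ‖F0 ω‖)
        refine tendsto_atTop_of_eventually_const (i₀ := N) fun n hn => ?_
        have hNn : (N : ℝ) ≤ n := Nat.cast_le.mpr hn
        have hωE : ω ∉ E n := by
          intro hc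
          simp only [hE, Set.mem_union, Set.mem_setOf_eq] at hc
          rcases hc with h | h
          · have h1 : ‖F0 ω‖ / ‖F1 ω‖ < N :=
              lt_of_le_of_lt (le_max_left _ _) hN
            have h2 : ‖F0 ω‖ < N * ‖F1 ω‖ :=
              (div_lt_iff₀ h1pos).mp h1
            nlinarith
          · have h1 : ‖F1 ω‖ / ‖F0 ω‖ < N :=
              lt_of_le_of_lt (le_max_right _ _) hN
            have h2 : ‖F1 ω‖ < N * ‖F0 ω‖ :=
              (div_lt_iff₀ h0pos).mp h1
            nlinarith
        exact Set.indicator_of_notMem hωE _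
      · refine tendsto_atTop_of_eventually_const (i₀ := 0) fun n _ => ?_
        by_cases hωE : ω ∈ E n
        · rw [Set.indicator_of_mem hωE, hG1]
          exact Set.indicator_of_notMem hωS F1
        · exact Set.indicator_of_notMem hωE _
    have ht0 := X0.tendsto_qnorm_indicator h0 G0 hG0mem E hEmeas hEanti
      (Eventually.of_forall hzero0)
    have ht1 := X1.tendsto_qnorm_indicator h1 G1 hG1mem E hEmeas hEanti
      (Eventually.of_forall hzero1)
    obtain ⟨n, hn0, hn1⟩ := ((ht0.eventually_lt_const hε2pos).and
      (ht1.eventually_lt_const hε2pos)).exists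
    set g : α → ℂ := (E n)ᶜ.indicator f with hg
    -- membership of g in X0 and X1
    have hEc : ∀ ω, ω ∉ E n → ‖F0 ω‖ ≤ n * ‖F1 ω‖
        ∧ ‖F1 ω‖ ≤ n * ‖F0 ω‖ := by
      intro ω hω
      simp only [hE, Set.mem_union, Set.mem_setOf_eq] at hω
      push_neg at hω
      exact ⟨hω.1, hω.2⟩
    have hg0mem : X0.Mem g := by
      set c0 : ℂ := (((n : ℝ) ^ θ : ℝ) : ℂ) with hc0
      refine X0.lattice_mem (c0 • G0) g (X0.smul_mem c0 G0 hG0mem)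
        (hfmeas.indicator (hEmeas n).compl) ?_
      filter_upwards [hdomG] with ω hω
      have habsc : ‖(c0 • G0) ω‖ = (n : ℝ) ^ θ * ‖G0 ω‖ := by
        rw [Pi.smul_apply, smul_eq_mul, norm_mul, hc0, Complex.norm_real, Real.norm_eq_abs,
          abs_of_nonneg (Real.rpow_nonneg (Nat.cast_nonneg n) _)]
      rw [habsc]
      by_cases hωE : ω ∈ E n
      · have : g ω = 0 := Set.indicator_of_notMem (by simpa using hωE) f
        rw [this]
        simp only [norm_zero]
        positivity
      · have hgf : g ω = f ω := Set.indicator_of_mem (by simpa using hωE) f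
        rw [hgf]
        by_cases hωS : ω ∈ S
        · have hG0F : G0 ω = F0 ω := Set.indicator_of_mem hωS F0
          have hG1F : G1 ω = F1 ω := Set.indicator_of_mem hωS F1
          have hle : ‖F1 ω‖ ≤ n * ‖F0 ω‖ := (hEc ω hωE).2
          calc ‖f ω‖
              ≤ ‖G0 ω‖ ^ (1 - θ) * ‖G1 ω‖ ^ θ := hω
            _ = ‖F0 ω‖ ^ (1 - θ) * ‖F1 ω‖ ^ θ := by
                rw [hG0F, hG1F]
            _ ≤ ‖F0 ω‖ ^ (1 - θ) * ((n : ℝ) * ‖F0 ω‖) ^ θ := by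
                refine mul_le_mul_of_nonneg_left ?_ (Real.rpow_nonneg
                  (norm_nonneg _) _)
                exact Real.rpow_le_rpow (norm_nonneg _) hle hθ0.le
            _ = (n : ℝ) ^ θ * (‖F0 ω‖ ^ (1 - θ) * ‖F0 ω‖ ^ θ) := by
                rw [Real.mul_rpow (Nat.cast_nonneg n) (norm_nonneg _)]
                ring
            _ = (n : ℝ) ^ θ * ‖F0 ω‖ := by
                rw [rpow_split hθ1 (norm_nonneg _)]
            _ = (n : ℝ) ^ θ * ‖G0 ω‖ := by rw [hG0F]
        · have hG0z : G0 ω = 0 := Set.indicator_of_notMem hωS F0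
          have hG1z : G1 ω = 0 := Set.indicator_of_notMem hωS F1
          have hf0 : ‖f ω‖ ≤ 0 := by
            refine le_trans hω (le_of_eq ?_)
            rw [hG0z, hG1z]
            simp [Real.zero_rpow (ne_of_gt hθ0)]
          refine le_trans hf0 ?_
          have : (0:ℝ) ≤ (n : ℝ) ^ θ * ‖G0 ω‖ :=
            mul_nonneg (Real.rpow_nonneg (Nat.cast_nonneg n) _) (norm_nonneg _)
          exact this
    have hg1mem : X1.Mem g := by
      set c1 : ℂ := (((n : ℝ) ^ (1 - θ) : ℝ) : ℂ) with hc1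
      refine X1.lattice_mem (c1 • G1) g (X1.smul_mem c1 G1 hG1mem)
        (hfmeas.indicator (hEmeas n).compl) ?_
      filter_upwards [hdomG] with ω hω
      have habsc : ‖(c1 • G1) ω‖ = (n : ℝ) ^ (1 - θ) * ‖G1 ω‖ := by
        rw [Pi.smul_apply, smul_eq_mul, norm_mul, hc1, Complex.norm_real, Real.norm_eq_abs,
          abs_of_nonneg (Real.rpow_nonneg (Nat.cast_nonneg n) _)]
      rw [habsc]
      by_cases hωE : ω ∈ E n
      · have : g ω = 0 := Set.indicator_of_notMem (by simpa using hωE) f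
        rw [this]
        simp only [norm_zero]
        positivity
      · have hgf : g ω = f ω := Set.indicator_of_mem (by simpa using hωE) f
        rw [hgf]
        by_cases hωS : ω ∈ S
        · have hG0F : G0 ω = F0 ω := Set.indicator_of_mem hωS F0
          have hG1F : G1 ω = F1 ω := Set.indicator_of_mem hωS F1
          have hle : ‖F0 ω‖ ≤ n * ‖F1 ω‖ := (hEc ω hωE).1
          calc ‖f ω‖
              ≤ ‖G0 ω‖ ^ (1 - θ) * ‖G1 ω‖ ^ θ := hω
            _ = ‖F0 ω‖ ^ (1 - θ) * ‖F1 ω‖ ^ θ := by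
                rw [hG0F, hG1F]
            _ ≤ ((n : ℝ) * ‖F1 ω‖) ^ (1 - θ) * ‖F1 ω‖ ^ θ := by
                refine mul_le_mul_of_nonneg_right ?_ (Real.rpow_nonneg
                  (norm_nonneg _) _)
                exact Real.rpow_le_rpow (norm_nonneg _) hle hθ1'.le
            _ = (n : ℝ) ^ (1 - θ) * (‖F1 ω‖ ^ (1 - θ) * ‖F1 ω‖ ^ θ) := by
                rw [Real.mul_rpow (Nat.cast_nonneg n) (norm_nonneg _)]
                ring
            _ = (n : ℝ) ^ (1 - θ) * ‖F1 ω‖ := by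
                rw [rpow_split hθ1 (norm_nonneg _)]
            _ = (n : ℝ) ^ (1 - θ) * ‖G1 ω‖ := by rw [hG1F]
        · have hG0z : G0 ω = 0 := Set.indicator_of_notMem hωS F0
          have hG1z : G1 ω = 0 := Set.indicator_of_notMem hωS F1
          have hf0 : ‖f ω‖ ≤ 0 := by
            refine le_trans hω (le_of_eq ?_)
            rw [hG0z, hG1z]
            simp [Real.zero_rpow (ne_of_gt hθ0)]
          refine le_trans hf0 ?_
          exact mul_nonneg (Real.rpow_nonneg (Nat.cast_nonneg n) _) (norm_nonneg _)
    obtain ⟨t, htT, htq0, htq1⟩ := hTd g hg0mem hg1mem ε2 hε2pos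
    refine ⟨t, htT, ?_⟩
    have hp0 : X0.Mem ((E n).indicator G0) := X0.mem_indicator hG0mem (hEmeas n)
    have hp1 : X1.Mem ((E n).indicator G1) := X1.mem_indicator hG1mem (hEmeas n)
    have hq0 : X0.Mem (g - t) := X0.mem_sub hg0mem (hTmem t htT).1
    have hq1 : X1.Mem (g - t) := X1.mem_sub hg1mem (hTmem t htT).2
    have hdφ : ∀ᵐ ω ∂μ, ‖(E n).indicator f ω‖ ≤
        ‖(E n).indicator G0 ω‖ ^ (1 - θ) *
          ‖(E n).indicator G1 ω‖ ^ θ := by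
      filter_upwards [hdomG] with ω hω
      by_cases hωE : ω ∈ E n
      · rw [Set.indicator_of_mem hωE, Set.indicator_of_mem hωE, Set.indicator_of_mem hωE]
        exact hω
      · rw [Set.indicator_of_notMem hωE, Set.indicator_of_notMem hωE,
          Set.indicator_of_notMem hωE]
        simp [Real.zero_rpow (ne_of_gt hθ0)]
    have hdψ : ∀ᵐ ω ∂μ, ‖(g - t) ω‖ ≤
        ‖(g - t) ω‖ ^ (1 - θ) * ‖(g - t) ω‖ ^ θ :=
      Eventually.of_forall fun ω => (rpow_split hθ1 (norm_nonneg _)).symm.le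
    have hsum := calNorm_add_le_of_parts X0 X1 hθ0 hθ1 hp0 hp1 hq0 hq1 hdφ hdψ
      hn0.le hn1.le htq0.le htq1.le
    have hsplitf : (E n).indicator f + (g - t) = f - t := by
      have h := Set.indicator_self_add_compl (E n) f
      calc (E n).indicator f + (g - t) = ((E n).indicator f + g) - t := by ring
        _ = f - t := by rw [hg]; rw [h]
    rw [hsplitf] at hsum
    refine lt_of_le_of_lt hsum ?_
    have heq : X0.Cq ^ (1 - θ) * X1.Cq ^ θ * (ε2 + ε2) = ε / 2 := by
      rw [hε2, hK]
      field_simp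
      ring
    rw [heq]
    linarith
end
end

section
/- Let $X_0, X_1$ be quasi-Banach function spaces over $\Omega$ and $\theta \in (0,1)$. If $X_0$ is order continuous, then the Calderón product $X_0^{1-\theta} X_1^{\theta}$ is order continuous. -/
open MeasureTheory Filter Topology Finset

noncomputable section

variable {α : Type*} [MeasurableSpace α] {μ : MeasureTheory.Measure α}

/-- Order continuity of a function space given by a membership predicate and a
quasi-norm: whenever a sequence of nonnegative members decreases pointwise
a.e. to `0`, its quasi-norms tend to `0`. -/
def OrderContFS (μ : MeasureTheory.Measure α) (Mem : (α → ℂ) → Prop)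
    (q : (α → ℂ) → ℝ) : Prop :=
  ∀ f : ℕ → α → ℂ, (∀ n, Mem (f n)) →
    (∀ᵐ ω ∂μ, (∀ n, (f n ω).im = 0 ∧ 0 ≤ (f n ω).re ∧
        (f (n + 1) ω).re ≤ (f n ω).re) ∧
      Tendsto (fun n => (f n ω).re) atTop (𝓝 0)) →
    Tendsto (fun n => q (f n)) atTop (𝓝 0)

private lemma calderon_aux_le {θ a b c : ℝ} (hθ0 : 0 < θ) (hθ1 : θ < 1)
    (ha : 0 ≤ a) (hc : 0 ≤ c)
    (h : a ≤ b ^ (1 - θ) * c ^ θ) :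
    a ≤ (min b (a ^ (1 / (1 - θ)) * c ^ (-(θ / (1 - θ))))) ^ (1 - θ) * c ^ θ := by
  have h1θ : 0 < 1 - θ := by linarith
  rcases eq_or_lt_of_le hc with hc0 | hc0
  · rw [← hc0] at h ⊢
    rw [Real.zero_rpow hθ0.ne'] at h ⊢
    simpa using h
  · rcases le_total b (a ^ (1 / (1 - θ)) * c ^ (-(θ / (1 - θ)))) with hbt | htb
    · rw [min_eq_left hbt]; exact h
    · rw [min_eq_right htb,
        Real.mul_rpow (Real.rpow_nonneg ha _) (Real.rpow_nonneg hc _),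
        ← Real.rpow_mul ha, ← Real.rpow_mul hc,
        one_div_mul_cancel h1θ.ne', Real.rpow_one,
        mul_assoc, ← Real.rpow_add hc0]
      have : -(θ / (1 - θ)) * (1 - θ) + θ = 0 := by
          have h' : θ / (1 - θ) * (1 - θ) = θ := div_mul_cancel₀ _ h1θ.ne'
          linear_combination -h'
      rw [this, Real.rpow_zero, mul_one]

/-- If `X₀` is order continuous, then the Calderón product `X₀^(1-θ) X₁^θ` is
order continuous. -/
theorem calderon_product_order_continuous (X0 X1 : QBFS α μ) (θ : ℝ)
    (hθ : θ ∈ Set.Ioo (0 : ℝ) 1)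
    (h0 : OrderContFS μ X0.Mem X0.qnorm) :
    OrderContFS μ (CalMem X0 X1 θ) (calNorm X0 X1 θ) := by
  obtain ⟨hθ0, hθ1⟩ := hθ
  have h1θ : 0 < 1 - θ := by linarith
  have hp : (0:ℝ) ≤ 1 / (1 - θ) := by positivity
  intro f hmem hae
  obtain ⟨r0, g0, g1, hg0, hg1, hfac, -⟩ := (hmem 0).2
  set F : ℕ → α → ℝ := fun n ω => max (f n ω).re 0 with hF
  set h : ℕ → α → ℝ := fun n ω =>
    min (‖g0 ω‖)
      (F n ω ^ (1 / (1 - θ)) * ‖g1 ω‖ ^ (-(θ / (1 - θ)))) with hh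
  have hFnn : ∀ n ω, 0 ≤ F n ω := fun n ω => le_max_right _ _
  have hhnn : ∀ n ω, 0 ≤ h n ω := fun n ω =>
    le_min (norm_nonneg _)
      (mul_nonneg (Real.rpow_nonneg (hFnn n ω) _) (Real.rpow_nonneg (norm_nonneg _) _))
  set H : ℕ → α → ℂ := fun n ω => ((h n ω : ℝ) : ℂ) with hH
  -- key a.e. facts
  have key : ∀ᵐ ω ∂μ,
      (∀ n, ‖f n ω‖ = F n ω ∧ F (n + 1) ω ≤ F n ω ∧
        ‖f n ω‖ ≤ h n ω ^ (1 - θ) * ‖g1 ω‖ ^ θ) ∧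
      Tendsto (fun n => h n ω) atTop (𝓝 0) := by
    filter_upwards [hae, hfac] with ω hω hfω
    obtain ⟨hmono, hlim⟩ := hω
    have habs : ∀ n, ‖f n ω‖ = F n ω := by
      intro n
      have him := (hmono n).1
      have hre := (hmono n).2.1
      have : f n ω = ((f n ω).re : ℂ) := Complex.ext rfl (by simp [him])
      rw [this, Complex.norm_real, Real.norm_eq_abs, abs_of_nonneg hre]
      exact (max_eq_left hre).symm
    have hFm : ∀ n, F (n + 1) ω ≤ F n ω := fun n =>
      max_le_max (hmono n).2.2 le_rfl
    have hFanti : Antitone (fun n => F n ω) := antitone_nat_of_succ_le hFm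
    have hFb : ∀ n, F n ω ≤ ‖g0 ω‖ ^ (1 - θ) * ‖g1 ω‖ ^ θ :=
      fun n => by
      have h00 : F 0 ω ≤ ‖g0 ω‖ ^ (1 - θ) * ‖g1 ω‖ ^ θ :=
        (habs 0) ▸ hfω
      exact (hFanti (Nat.zero_le n)).trans h00
    refine ⟨fun n => ⟨habs n, hFm n, ?_⟩, ?_⟩
    · rw [habs n]
      exact calderon_aux_le hθ0 hθ1 (hFnn n ω) (norm_nonneg _) (hFb n)
    · -- tendsto h n ω → 0
      have hFlim : Tendsto (fun n => F n ω) atTop (𝓝 0) := by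
        have : (fun n => F n ω) = fun n => (f n ω).re :=
          funext fun n => max_eq_left (hmono n).2.1
        rw [this]; exact hlim
      have ht : Tendsto (fun n => F n ω ^ (1 / (1 - θ)) *
          ‖g1 ω‖ ^ (-(θ / (1 - θ)))) atTop (𝓝 0) := by
        have := (hFlim.rpow_const (Or.inr hp)).mul_const
          (‖g1 ω‖ ^ (-(θ / (1 - θ))))
        rwa [Real.zero_rpow (by positivity : (1:ℝ) / (1 - θ) ≠ 0), zero_mul] at this
      exact squeeze_zero (fun n => hhnn n ω) (fun n => min_le_right _ _) ht
  -- measurability of H n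
  have hmeasH : ∀ n, AEMeasurable (H n) μ := by
    intro n
    have hfm : AEMeasurable (f n) μ := (hmem n).1
    have h0m : AEMeasurable g0 μ := X0.mem_aemeasurable _ hg0
    have h1m : AEMeasurable g1 μ := X1.mem_aemeasurable _ hg1
    have habs0 : AEMeasurable (fun ω => ‖g0 ω‖) μ :=
      continuous_norm.measurable.comp_aemeasurable h0m
    have habs1 : AEMeasurable (fun ω => ‖g1 ω‖) μ :=
      continuous_norm.measurable.comp_aemeasurable h1m
    have hFm : AEMeasurable (F n) μ :=
      (Complex.measurable_re.comp_aemeasurable hfm).max aemeasurable_const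
    have hhm : AEMeasurable (h n) μ :=
      habs0.min ((hFm.pow aemeasurable_const).mul (habs1.pow aemeasurable_const))
    exact Complex.measurable_ofReal.comp_aemeasurable hhm
  -- membership of H n in X0
  have hmemH : ∀ n, X0.Mem (H n) := by
    intro n
    refine X0.lattice_mem g0 (H n) hg0 (hmeasH n) (Eventually.of_forall fun ω => ?_)
    rw [hH]
    simp only [Complex.norm_real, Real.norm_eq_abs, abs_of_nonneg (hhnn n ω)]
    exact min_le_left _ _
  -- order continuity of X0 applied to H
  have hHlim : Tendsto (fun n => X0.qnorm (H n)) atTop (𝓝 0) := by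
    refine h0 H hmemH ?_
    filter_upwards [key] with ω hω
    obtain ⟨hn, hlim⟩ := hω
    have hre : ∀ n, (H n ω).re = h n ω := fun n => by simp [hH]
    refine ⟨fun n => ⟨by simp [hH], by rw [hre]; exact hhnn n ω, ?_⟩, ?_⟩
    · rw [hre, hre]
      refine min_le_min le_rfl (mul_le_mul_of_nonneg_right ?_
        (Real.rpow_nonneg (norm_nonneg _) _))
      exact Real.rpow_le_rpow (hFnn _ ω) (hn n).2.1 hp
    · simpa only [hre] using hlim
  -- bound on calNorm
  have hCb : ∀ n, calNorm X0 X1 θ (f n) ≤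
      X0.qnorm (H n) ^ (1 - θ) * X1.qnorm g1 ^ θ := by
    intro n
    apply csInf_le
    · refine ⟨0, fun r hr => ?_⟩
      obtain ⟨a, b, -, -, -, rfl⟩ := hr
      exact mul_nonneg (Real.rpow_nonneg (X0.qnorm_nonneg _) _)
        (Real.rpow_nonneg (X1.qnorm_nonneg _) _)
    · refine ⟨H n, g1, hmemH n, hg1, ?_, rfl⟩
      filter_upwards [key] with ω hω
      have : ‖H n ω‖ = h n ω := by
        simp [hH, abs_of_nonneg (hhnn n ω)]
      rw [this]
      exact (hω.1 n).2.2
  have hC0 : ∀ n, 0 ≤ calNorm X0 X1 θ (f n) := by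
    intro n
    apply Real.sInf_nonneg
    rintro r ⟨a, b, -, -, -, rfl⟩
    exact mul_nonneg (Real.rpow_nonneg (X0.qnorm_nonneg _) _)
      (Real.rpow_nonneg (X1.qnorm_nonneg _) _)
  refine squeeze_zero hC0 hCb ?_
  have := (hHlim.rpow_const (Or.inr h1θ.le)).mul_const (X1.qnorm g1 ^ θ)
  rwa [Real.zero_rpow h1θ.ne', zero_mul] at this
end
end

section
/- Let $X_0, X_1$ be quasi-Banach function spaces over $\Omega$ that are both $p$-convex for some $p \in (0,1]$, with constants $C_0, C_1$. Then the sum space $X_0 + X_1$ (with quasi-norm $\|f\| = \inf\{\|f_0\|_{X_0} + \|f_1\|_{X_1} : f = f_0 + f_1\}$) is also $p$-convex. -/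
open MeasureTheory Filter Topology Finset

noncomputable section

variable {α : Type*} [MeasurableSpace α] {μ : MeasureTheory.Measure α}

/-- `p`-convexity (with constant `C`) of a function space given by a membership
predicate and a quasi-norm. -/
def PConvexFS (Mem : (α → ℂ) → Prop) (q : (α → ℂ) → ℝ) (p C : ℝ) : Prop :=
  ∀ n : ℕ, ∀ g : ℕ → α → ℂ, (∀ k, Mem (g k)) →
    q (fun ω => (((∑ k ∈ Finset.range (n + 1), ‖g k ω‖ ^ p)
        ^ (1 / p) : ℝ) : ℂ)) ≤
      C * (∑ k ∈ Finset.range (n + 1), q (g k) ^ p) ^ (1 / p)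

lemma my_rpow_add_le {a b p : ℝ} (ha : 0 ≤ a) (hb : 0 ≤ b) (hp : 0 ≤ p) (hp1 : p ≤ 1) :
    (a + b) ^ p ≤ a ^ p + b ^ p := by
  have h := NNReal.rpow_add_le_add_rpow (⟨a, ha⟩ : NNReal) (⟨b, hb⟩ : NNReal) hp hp1
  have h2 := NNReal.coe_le_coe.mpr h
  push_cast at h2
  exact h2

lemma QBFS.zero_mem (X : QBFS α μ) : X.Mem 0 := by
  obtain ⟨f, hf, -⟩ := X.exists_weak_unit
  have h := X.smul_mem 0 f hf
  rwa [zero_smul] at h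

lemma QBFS.finsum_mem (X : QBFS α μ) (f : ℕ → α → ℂ) (h : ∀ k, X.Mem (f k)) (s : Finset ℕ) :
    X.Mem (∑ k ∈ s, f k) := by
  classical
  induction s using Finset.induction_on with
  | empty => simpa using X.zero_mem
  | insert _ _ hk ih => rw [Finset.sum_insert hk]; exact X.add_mem _ _ (h _) ih

lemma QBFS.pnorm_mem (X : QBFS α μ) {p : ℝ} (hp0 : 0 < p) (n : ℕ)
    (u : ℕ → α → ℂ) (hu : ∀ k, X.Mem (u k)) :
    X.Mem (fun ω => (((∑ k ∈ Finset.range (n + 1), ‖u k ω‖ ^ p)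
      ^ (1 / p) : ℝ) : ℂ)) := by
  have hum : ∀ k, AEMeasurable (u k) μ := fun k => X.mem_aemeasurable _ (hu k)
  have habs : ∀ k, AEMeasurable (fun ω => ‖u k ω‖) μ := fun k =>
    continuous_norm.measurable.comp_aemeasurable (hum k)
  have hmem_abs : ∀ k, X.Mem (fun ω => ((‖u k ω‖ : ℝ) : ℂ)) := by
    intro k
    refine X.lattice_mem (u k) _ (hu k)
      (Complex.measurable_ofReal.comp_aemeasurable (habs k)) ?_
    filter_upwards with ω
    simp [Complex.norm_real, Real.norm_eq_abs, abs_of_nonneg (norm_nonneg _)]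
  have hmemS : X.Mem (fun ω =>
      ((∑ k ∈ Finset.range (n + 1), ‖u k ω‖ : ℝ) : ℂ)) := by
    have h := X.finsum_mem (fun k => fun ω => ((‖u k ω‖ : ℝ) : ℂ))
      hmem_abs (Finset.range (n + 1))
    refine X.mem_congr _ _ h ?_
    filter_upwards with ω
    simp [Finset.sum_apply]
  have hD : X.Mem ((((n + 1 : ℝ) ^ (1 / p) : ℝ) : ℂ) • (fun ω =>
      ((∑ k ∈ Finset.range (n + 1), ‖u k ω‖ : ℝ) : ℂ))) :=
    X.smul_mem _ _ hmemS
  refine X.lattice_mem _ _ hD ?_ ?_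
  · exact Complex.measurable_ofReal.comp_aemeasurable
      ((Finset.aemeasurable_fun_sum _ (fun k _ => (habs k).pow_const p)).pow_const (1 / p))
  filter_upwards with ω
  have hA : (0:ℝ) ≤ ∑ k ∈ Finset.range (n + 1), ‖u k ω‖ :=
    Finset.sum_nonneg fun i _ => norm_nonneg _
  have hS : (0:ℝ) ≤ ∑ k ∈ Finset.range (n + 1), ‖u k ω‖ ^ p :=
    Finset.sum_nonneg fun i _ => Real.rpow_nonneg (norm_nonneg _) _
  have key : ∑ k ∈ Finset.range (n + 1), ‖u k ω‖ ^ p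
      ≤ (n + 1 : ℝ) * (∑ k ∈ Finset.range (n + 1), ‖u k ω‖) ^ p := by
    calc ∑ k ∈ Finset.range (n + 1), ‖u k ω‖ ^ p
        ≤ ∑ _k ∈ Finset.range (n + 1),
            (∑ j ∈ Finset.range (n + 1), ‖u j ω‖) ^ p :=
          Finset.sum_le_sum fun i hi => Real.rpow_le_rpow (norm_nonneg _)
            (Finset.single_le_sum (fun j _ => norm_nonneg (u j ω)) hi) hp0.le
      _ = (n + 1 : ℝ) * (∑ j ∈ Finset.range (n + 1), ‖u j ω‖) ^ p := by
          rw [Finset.sum_const, Finset.card_range, nsmul_eq_mul]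
          push_cast; ring
  have h2 : (∑ k ∈ Finset.range (n + 1), ‖u k ω‖ ^ p) ^ (1 / p)
      ≤ ((n + 1 : ℝ) ^ (1 / p)) * (∑ k ∈ Finset.range (n + 1), ‖u k ω‖) := by
    calc (∑ k ∈ Finset.range (n + 1), ‖u k ω‖ ^ p) ^ (1 / p)
        ≤ ((n + 1 : ℝ) * (∑ k ∈ Finset.range (n + 1), ‖u k ω‖) ^ p)
            ^ (1 / p) := Real.rpow_le_rpow hS key (by positivity)
      _ = ((n + 1 : ℝ) ^ (1 / p)) * (∑ k ∈ Finset.range (n + 1), ‖u k ω‖) := by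
          rw [Real.mul_rpow (by positivity) (Real.rpow_nonneg hA _), one_div,
            Real.rpow_rpow_inv hA hp0.ne']
  have e1 : ‖(((∑ k ∈ Finset.range (n + 1), ‖u k ω‖ ^ p)
      ^ (1 / p) : ℝ) : ℂ)‖ = (∑ k ∈ Finset.range (n + 1), ‖u k ω‖ ^ p)
      ^ (1 / p) := by
    rw [Complex.norm_real, Real.norm_eq_abs, abs_of_nonneg (Real.rpow_nonneg hS _)]
  have e2 : ‖((((n + 1 : ℝ) ^ (1 / p) : ℝ) : ℂ) • (fun ω =>
      ((∑ k ∈ Finset.range (n + 1), ‖u k ω‖ : ℝ) : ℂ))) ω‖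
      = (n + 1 : ℝ) ^ (1 / p) * (∑ k ∈ Finset.range (n + 1), ‖u k ω‖) := by
    simp only [Pi.smul_apply, smul_eq_mul, norm_mul, Complex.norm_real, Real.norm_eq_abs]
    rw [abs_of_nonneg (by positivity : (0:ℝ) ≤ (n + 1 : ℝ) ^ (1 / p)), abs_of_nonneg hA]
  rw [e1, e2]
  exact h2
/-- If `X₀` and `X₁` are `p`-convex quasi-Banach function spaces, then the sum
space `X₀ + X₁` is `p`-convex. -/
theorem sum_space_p_convex (X0 X1 : QBFS α μ) (p C0 C1 : ℝ)
    (hp0 : 0 < p) (hp1 : p ≤ 1) (hC0 : 1 ≤ C0) (hC1 : 1 ≤ C1)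
    (h0 : PConvexFS X0.Mem X0.qnorm p C0)
    (h1 : PConvexFS X1.Mem X1.qnorm p C1) :
    ∃ C : ℝ, 1 ≤ C ∧ PConvexFS (SumMem X0 X1) (sumNorm X0 X1) p C := by
  classical
  set K := max C0 C1 with hK
  have hK1 : 1 ≤ K := le_trans hC0 (le_max_left _ _)
  set c : ℝ := (2 : ℝ) ^ (1 / p) with hc
  have hcpos : 0 < c := Real.rpow_pos_of_pos two_pos _
  set C : ℝ := 2 ^ (2 / p + 1) * K with hC
  have hCsplit : C = 2 * c * c * K := by
    rw [hC, hc, show 2 / p + 1 = 1 / p + (1 / p + 1) by ring, Real.rpow_add two_pos,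
      Real.rpow_add two_pos, Real.rpow_one]
    ring
  have hC1' : 1 ≤ C := by
    have h2 : (1 : ℝ) ≤ 2 ^ (2 / p + 1) :=
      Real.one_le_rpow one_le_two (by positivity)
    calc (1 : ℝ) = 1 * 1 := by ring
      _ ≤ 2 ^ (2 / p + 1) * K := mul_le_mul h2 hK1 zero_le_one (by linarith)
  refine ⟨C, hC1', ?_⟩
  intro n g hg
  have hbdd : ∀ f : α → ℂ, BddBelow (sumNormSet X0 X1 f) := by
    intro f
    refine ⟨0, ?_⟩
    rintro r ⟨a, b, ha, hb, hab, rfl⟩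
    exact add_nonneg (X0.qnorm_nonneg a) (X1.qnorm_nonneg b)
  have hne : ∀ k, (sumNormSet X0 X1 (g k)).Nonempty := by
    intro k
    obtain ⟨a, b, ha, hb, hab⟩ := hg k
    exact ⟨_, a, b, ha, hb, hab, rfl⟩
  have hsn0 : ∀ k, 0 ≤ sumNorm X0 X1 (g k) := by
    intro k
    refine le_csInf (hne k) ?_
    rintro r ⟨a, b, ha, hb, hab, rfl⟩
    exact add_nonneg (X0.qnorm_nonneg a) (X1.qnorm_nonneg b)
  set T := ∑ k ∈ Finset.range (n + 1), sumNorm X0 X1 (g k) ^ p with hT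
  have hT0 : 0 ≤ T :=
    Finset.sum_nonneg fun k _ => Real.rpow_nonneg (hsn0 k) _
  -- the key estimate with an ε of room
  have key : ∀ ε : ℝ, 0 < ε →
      sumNorm X0 X1 (fun ω => (((∑ k ∈ Finset.range (n + 1),
        ‖g k ω‖ ^ p) ^ (1 / p) : ℝ) : ℂ)) ≤ C * (T + ε) ^ (1 / p) := by
    intro ε hε
    set δ : ℝ := (ε / (n + 1)) ^ (1 / p) with hδdef
    have hδ : 0 < δ := Real.rpow_pos_of_pos (by positivity) _
    have hδp : δ ^ p = ε / (n + 1) := by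
      rw [hδdef, one_div, Real.rpow_inv_rpow (by positivity) hp0.ne']
    have hdec : ∀ k, ∃ a b, X0.Mem a ∧ X1.Mem b ∧ g k =ᵐ[μ] a + b ∧
        X0.qnorm a + X1.qnorm b ≤ sumNorm X0 X1 (g k) + δ := by
      intro k
      obtain ⟨r, hr, hrlt⟩ := (csInf_lt_iff (hbdd _) (hne k)).mp
        (lt_add_of_pos_right (sumNorm X0 X1 (g k)) hδ)
      obtain ⟨a, b, ha, hb, hab, rfl⟩ := hr
      exact ⟨a, b, ha, hb, hab, hrlt.le⟩
    choose u v hu hv huv hbound using hdec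
    -- real-valued auxiliary functions
    set Fr : α → ℝ := fun ω =>
      (∑ k ∈ Finset.range (n + 1), ‖g k ω‖ ^ p) ^ (1 / p) with hFr
    set F0r : α → ℝ := fun ω =>
      (∑ k ∈ Finset.range (n + 1), ‖u k ω‖ ^ p) ^ (1 / p) with hF0r
    set F1r : α → ℝ := fun ω =>
      (∑ k ∈ Finset.range (n + 1), ‖v k ω‖ ^ p) ^ (1 / p) with hF1r
    have hFr0 : ∀ ω, 0 ≤ Fr ω := fun ω =>
      Real.rpow_nonneg (Finset.sum_nonneg fun k _ =>
        Real.rpow_nonneg (norm_nonneg _) _) _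
    have hF0r0 : ∀ ω, 0 ≤ F0r ω := fun ω =>
      Real.rpow_nonneg (Finset.sum_nonneg fun k _ =>
        Real.rpow_nonneg (norm_nonneg _) _) _
    have hF1r0 : ∀ ω, 0 ≤ F1r ω := fun ω =>
      Real.rpow_nonneg (Finset.sum_nonneg fun k _ =>
        Real.rpow_nonneg (norm_nonneg _) _) _
    -- pointwise estimate
    have hFle : ∀ᵐ ω ∂μ, Fr ω ≤ c * F0r ω + c * F1r ω := by
      have hae : ∀ᵐ ω ∂μ, ∀ k, g k ω = u k ω + v k ω := ae_all_iff.mpr fun k => huv k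
      filter_upwards [hae] with ω hω
      have hS0 : (0:ℝ) ≤ ∑ k ∈ Finset.range (n + 1), ‖u k ω‖ ^ p :=
        Finset.sum_nonneg fun k _ => Real.rpow_nonneg (norm_nonneg _) _
      have hS1 : (0:ℝ) ≤ ∑ k ∈ Finset.range (n + 1), ‖v k ω‖ ^ p :=
        Finset.sum_nonneg fun k _ => Real.rpow_nonneg (norm_nonneg _) _
      have e0 : (F0r ω) ^ p = ∑ k ∈ Finset.range (n + 1), ‖u k ω‖ ^ p := by
        show ((∑ k ∈ Finset.range (n + 1), ‖u k ω‖ ^ p) ^ (1 / p)) ^ p = _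
        rw [one_div, Real.rpow_inv_rpow hS0 hp0.ne']
      have e1 : (F1r ω) ^ p = ∑ k ∈ Finset.range (n + 1), ‖v k ω‖ ^ p := by
        show ((∑ k ∈ Finset.range (n + 1), ‖v k ω‖ ^ p) ^ (1 / p)) ^ p = _
        rw [one_div, Real.rpow_inv_rpow hS1 hp0.ne']
      have hsum : ∑ k ∈ Finset.range (n + 1), ‖g k ω‖ ^ p
          ≤ 2 * (F0r ω + F1r ω) ^ p := by
        have hs : ∑ k ∈ Finset.range (n + 1), ‖g k ω‖ ^ p
            ≤ (∑ k ∈ Finset.range (n + 1), ‖u k ω‖ ^ p)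
              + ∑ k ∈ Finset.range (n + 1), ‖v k ω‖ ^ p := by
          rw [← Finset.sum_add_distrib]
          refine Finset.sum_le_sum fun k _ => ?_
          have h1 : ‖g k ω‖ ≤ ‖u k ω‖ + ‖v k ω‖ := by
            rw [hω k]; exact norm_add_le _ _
          calc ‖g k ω‖ ^ p
              ≤ (‖u k ω‖ + ‖v k ω‖) ^ p :=
                Real.rpow_le_rpow (norm_nonneg _) h1 hp0.le
            _ ≤ ‖u k ω‖ ^ p + ‖v k ω‖ ^ p :=
                my_rpow_add_le (norm_nonneg _) (norm_nonneg _) hp0.le hp1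
        have hb0 : (F0r ω) ^ p ≤ (F0r ω + F1r ω) ^ p :=
          Real.rpow_le_rpow (hF0r0 ω) (le_add_of_nonneg_right (hF1r0 ω)) hp0.le
        have hb1 : (F1r ω) ^ p ≤ (F0r ω + F1r ω) ^ p :=
          Real.rpow_le_rpow (hF1r0 ω) (le_add_of_nonneg_left (hF0r0 ω)) hp0.le
        rw [← e0, ← e1] at hs
        linarith
      have h2 : Fr ω ≤ (2 * (F0r ω + F1r ω) ^ p) ^ (1 / p) :=
        Real.rpow_le_rpow (Finset.sum_nonneg fun k _ =>
          Real.rpow_nonneg (norm_nonneg _) _) hsum (by positivity)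
      calc Fr ω ≤ (2 * (F0r ω + F1r ω) ^ p) ^ (1 / p) := h2
        _ = c * (F0r ω + F1r ω) := by
            rw [Real.mul_rpow two_pos.le (Real.rpow_nonneg (by positivity) _), one_div,
              Real.rpow_rpow_inv (by positivity) hp0.ne', hc, one_div]
        _ = c * F0r ω + c * F1r ω := by ring
    -- the decomposition of Fr
    set h0r : α → ℝ := fun ω => min (Fr ω) (c * F0r ω) with hh0rdef
    set h1r : α → ℝ := fun ω => Fr ω - h0r ω with hh1rdef
    have hh0r0 : ∀ ω, 0 ≤ h0r ω := fun ω =>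
      le_min (hFr0 ω) (mul_nonneg hcpos.le (hF0r0 ω))
    have hh0le : ∀ ω, h0r ω ≤ c * F0r ω := fun ω => min_le_right _ _
    have hh1r0 : ∀ ω, 0 ≤ h1r ω := fun ω => sub_nonneg.mpr (min_le_left _ _)
    have hh1le : ∀ᵐ ω ∂μ, h1r ω ≤ c * F1r ω := by
      filter_upwards [hFle] with ω hω
      rcases le_total (Fr ω) (c * F0r ω) with h | h
      · show Fr ω - min (Fr ω) (c * F0r ω) ≤ c * F1r ω
        rw [min_eq_left h]
        simp only [sub_self]
        exact mul_nonneg hcpos.le (hF1r0 ω)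
      · show Fr ω - min (Fr ω) (c * F0r ω) ≤ c * F1r ω
        rw [min_eq_right h]
        linarith
    have hsplit : ∀ ω, Fr ω = h0r ω + h1r ω := fun ω => by
      show Fr ω = h0r ω + (Fr ω - h0r ω); ring
    -- measurability
    have hum : ∀ k, AEMeasurable (u k) μ := fun k => X0.mem_aemeasurable _ (hu k)
    have hvm : ∀ k, AEMeasurable (v k) μ := fun k => X1.mem_aemeasurable _ (hv k)
    have hgm : ∀ k, AEMeasurable (g k) μ := fun k =>
      ((hum k).add (hvm k)).congr (huv k).symm
    have habsu : ∀ k, AEMeasurable (fun ω => ‖u k ω‖) μ := fun k =>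
      continuous_norm.measurable.comp_aemeasurable (hum k)
    have habsv : ∀ k, AEMeasurable (fun ω => ‖v k ω‖) μ := fun k =>
      continuous_norm.measurable.comp_aemeasurable (hvm k)
    have habsg : ∀ k, AEMeasurable (fun ω => ‖g k ω‖) μ := fun k =>
      continuous_norm.measurable.comp_aemeasurable (hgm k)
    have hF0rm : AEMeasurable F0r μ :=
      (Finset.aemeasurable_fun_sum _ fun k _ => (habsu k).pow_const p).pow_const (1 / p)
    have hF1rm : AEMeasurable F1r μ :=
      (Finset.aemeasurable_fun_sum _ fun k _ => (habsv k).pow_const p).pow_const (1 / p)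
    have hFrm : AEMeasurable Fr μ :=
      (Finset.aemeasurable_fun_sum _ fun k _ => (habsg k).pow_const p).pow_const (1 / p)
    have hh0rm : AEMeasurable h0r μ := hFrm.min (hF0rm.const_mul c)
    have hh1rm : AEMeasurable h1r μ := hFrm.sub hh0rm
    -- membership of the pieces
    have hF0cmem : X0.Mem (fun ω => ((F0r ω : ℝ) : ℂ)) := X0.pnorm_mem hp0 n u hu
    have hF1cmem : X1.Mem (fun ω => ((F1r ω : ℝ) : ℂ)) := X1.pnorm_mem hp0 n v hv
    have hH0eq : ((c : ℂ) • fun ω => ((F0r ω : ℝ) : ℂ))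
        =ᵐ[μ] (fun ω => ((c * F0r ω : ℝ) : ℂ)) := by
      filter_upwards with ω
      simp [Pi.smul_apply, smul_eq_mul]
    have hH1eq : ((c : ℂ) • fun ω => ((F1r ω : ℝ) : ℂ))
        =ᵐ[μ] (fun ω => ((c * F1r ω : ℝ) : ℂ)) := by
      filter_upwards with ω
      simp [Pi.smul_apply, smul_eq_mul]
    have hH0mem : X0.Mem (fun ω => ((c * F0r ω : ℝ) : ℂ)) :=
      X0.mem_congr _ _ (X0.smul_mem (c : ℂ) _ hF0cmem) hH0eq
    have hH1mem : X1.Mem (fun ω => ((c * F1r ω : ℝ) : ℂ)) :=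
      X1.mem_congr _ _ (X1.smul_mem (c : ℂ) _ hF1cmem) hH1eq
    have hbnd0 : ∀ᵐ ω ∂μ, ‖((h0r ω : ℝ) : ℂ)‖
        ≤ ‖((c * F0r ω : ℝ) : ℂ)‖ := by
      filter_upwards with ω
      rw [Complex.norm_real, Real.norm_eq_abs, Complex.norm_real, Real.norm_eq_abs, abs_of_nonneg (hh0r0 ω),
        abs_of_nonneg (mul_nonneg hcpos.le (hF0r0 ω))]
      exact hh0le ω
    have hbnd1 : ∀ᵐ ω ∂μ, ‖((h1r ω : ℝ) : ℂ)‖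
        ≤ ‖((c * F1r ω : ℝ) : ℂ)‖ := by
      filter_upwards [hh1le] with ω hω
      rw [Complex.norm_real, Real.norm_eq_abs, Complex.norm_real, Real.norm_eq_abs, abs_of_nonneg (hh1r0 ω),
        abs_of_nonneg (mul_nonneg hcpos.le (hF1r0 ω))]
      exact hω
    have hh0mem : X0.Mem (fun ω => ((h0r ω : ℝ) : ℂ)) :=
      X0.lattice_mem _ _ hH0mem
        (Complex.measurable_ofReal.comp_aemeasurable hh0rm) hbnd0
    have hh1mem : X1.Mem (fun ω => ((h1r ω : ℝ) : ℂ)) :=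
      X1.lattice_mem _ _ hH1mem
        (Complex.measurable_ofReal.comp_aemeasurable hh1rm) hbnd1
    -- quasi-norm estimates
    set S0 := ∑ k ∈ Finset.range (n + 1), X0.qnorm (u k) ^ p with hS0def
    set S1 := ∑ k ∈ Finset.range (n + 1), X1.qnorm (v k) ^ p with hS1def
    have hS0nn : 0 ≤ S0 := Finset.sum_nonneg fun k _ =>
      Real.rpow_nonneg (X0.qnorm_nonneg _) _
    have hS1nn : 0 ≤ S1 := Finset.sum_nonneg fun k _ =>
      Real.rpow_nonneg (X1.qnorm_nonneg _) _
    have hq0 : X0.qnorm (fun ω => ((h0r ω : ℝ) : ℂ)) ≤ c * (C0 * S0 ^ (1 / p)) := by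
      have ha : X0.qnorm (fun ω => ((h0r ω : ℝ) : ℂ))
          ≤ X0.qnorm (fun ω => ((c * F0r ω : ℝ) : ℂ)) :=
        X0.lattice_qnorm _ _ hH0mem hbnd0
      have hb : X0.qnorm (fun ω => ((c * F0r ω : ℝ) : ℂ))
          = c * X0.qnorm (fun ω => ((F0r ω : ℝ) : ℂ)) := by
        rw [← X0.qnorm_congr _ _ hH0eq, X0.qnorm_smul, Complex.norm_real, Real.norm_eq_abs,
          abs_of_nonneg hcpos.le]
      have hcnv := h0 n u hu
      calc X0.qnorm (fun ω => ((h0r ω : ℝ) : ℂ))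
          ≤ c * X0.qnorm (fun ω => ((F0r ω : ℝ) : ℂ)) := hb ▸ ha
        _ ≤ c * (C0 * S0 ^ (1 / p)) := by
            exact mul_le_mul_of_nonneg_left hcnv hcpos.le
    have hq1 : X1.qnorm (fun ω => ((h1r ω : ℝ) : ℂ)) ≤ c * (C1 * S1 ^ (1 / p)) := by
      have ha : X1.qnorm (fun ω => ((h1r ω : ℝ) : ℂ))
          ≤ X1.qnorm (fun ω => ((c * F1r ω : ℝ) : ℂ)) :=
        X1.lattice_qnorm _ _ hH1mem hbnd1
      have hb : X1.qnorm (fun ω => ((c * F1r ω : ℝ) : ℂ))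
          = c * X1.qnorm (fun ω => ((F1r ω : ℝ) : ℂ)) := by
        rw [← X1.qnorm_congr _ _ hH1eq, X1.qnorm_smul, Complex.norm_real, Real.norm_eq_abs,
          abs_of_nonneg hcpos.le]
      have hcnv := h1 n v hv
      calc X1.qnorm (fun ω => ((h1r ω : ℝ) : ℂ))
          ≤ c * X1.qnorm (fun ω => ((F1r ω : ℝ) : ℂ)) := hb ▸ ha
        _ ≤ c * (C1 * S1 ^ (1 / p)) := by
            exact mul_le_mul_of_nonneg_left hcnv hcpos.le
    -- the decomposition puts us in the sumNormSet
    have hmemset : X0.qnorm (fun ω => ((h0r ω : ℝ) : ℂ))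
        + X1.qnorm (fun ω => ((h1r ω : ℝ) : ℂ))
        ∈ sumNormSet X0 X1 (fun ω => (((∑ k ∈ Finset.range (n + 1),
            ‖g k ω‖ ^ p) ^ (1 / p) : ℝ) : ℂ)) := by
      refine ⟨_, _, hh0mem, hh1mem, ?_, rfl⟩
      filter_upwards with ω
      show ((Fr ω : ℝ) : ℂ) = ((h0r ω : ℝ) : ℂ) + ((h1r ω : ℝ) : ℂ)
      rw [hsplit ω]; push_cast; ring
    have hstep1 : sumNorm X0 X1 (fun ω => (((∑ k ∈ Finset.range (n + 1),
        ‖g k ω‖ ^ p) ^ (1 / p) : ℝ) : ℂ))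
        ≤ X0.qnorm (fun ω => ((h0r ω : ℝ) : ℂ))
          + X1.qnorm (fun ω => ((h1r ω : ℝ) : ℂ)) :=
      csInf_le (hbdd _) hmemset
    -- numeric estimates
    have hS01 : S0 + S1 ≤ 2 * (T + ε) := by
      have hterm : ∀ k ∈ Finset.range (n + 1),
          X0.qnorm (u k) ^ p + X1.qnorm (v k) ^ p
            ≤ 2 * (sumNorm X0 X1 (g k) ^ p + δ ^ p) := by
        intro k _
        have h1' : X0.qnorm (u k) ≤ sumNorm X0 X1 (g k) + δ :=
          le_trans (le_add_of_nonneg_right (X1.qnorm_nonneg _)) (hbound k)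
        have h2' : X1.qnorm (v k) ≤ sumNorm X0 X1 (g k) + δ :=
          le_trans (le_add_of_nonneg_left (X0.qnorm_nonneg _)) (hbound k)
        have h3' : (sumNorm X0 X1 (g k) + δ) ^ p
            ≤ sumNorm X0 X1 (g k) ^ p + δ ^ p :=
          my_rpow_add_le (hsn0 k) hδ.le hp0.le hp1
        have h4' : X0.qnorm (u k) ^ p ≤ (sumNorm X0 X1 (g k) + δ) ^ p :=
          Real.rpow_le_rpow (X0.qnorm_nonneg _) h1' hp0.le
        have h5' : X1.qnorm (v k) ^ p ≤ (sumNorm X0 X1 (g k) + δ) ^ p :=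
          Real.rpow_le_rpow (X1.qnorm_nonneg _) h2' hp0.le
        linarith
      have hsum2 : S0 + S1 ≤ ∑ k ∈ Finset.range (n + 1),
          2 * (sumNorm X0 X1 (g k) ^ p + δ ^ p) := by
        rw [hS0def, hS1def, ← Finset.sum_add_distrib]
        exact Finset.sum_le_sum hterm
      have hre : ∑ k ∈ Finset.range (n + 1),
          2 * (sumNorm X0 X1 (g k) ^ p + δ ^ p) = 2 * (T + (n + 1) * δ ^ p) := by
        rw [← Finset.mul_sum, Finset.sum_add_distrib, Finset.sum_const,
          Finset.card_range, nsmul_eq_mul, hT]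
        push_cast; ring
      have hfin : (n + 1 : ℝ) * δ ^ p = ε := by
        rw [hδp]; field_simp
      calc S0 + S1 ≤ 2 * (T + (n + 1) * δ ^ p) := by rw [← hre]; exact hsum2
        _ = 2 * (T + ε) := by rw [hfin]
    have hS0le : S0 ^ (1 / p) ≤ (2 * (T + ε)) ^ (1 / p) :=
      Real.rpow_le_rpow hS0nn (le_trans (le_add_of_nonneg_right hS1nn) hS01)
        (by positivity)
    have hS1le : S1 ^ (1 / p) ≤ (2 * (T + ε)) ^ (1 / p) :=
      Real.rpow_le_rpow hS1nn (le_trans (le_add_of_nonneg_left hS0nn) hS01)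
        (by positivity)
    have h2Te : (2 * (T + ε)) ^ (1 / p) = c * (T + ε) ^ (1 / p) := by
      rw [Real.mul_rpow two_pos.le (by positivity)]
    -- put it together
    have hTe0 : (0:ℝ) ≤ (T + ε) ^ (1 / p) := Real.rpow_nonneg (by positivity) _
    calc sumNorm X0 X1 (fun ω => (((∑ k ∈ Finset.range (n + 1),
          ‖g k ω‖ ^ p) ^ (1 / p) : ℝ) : ℂ))
        ≤ X0.qnorm (fun ω => ((h0r ω : ℝ) : ℂ))
          + X1.qnorm (fun ω => ((h1r ω : ℝ) : ℂ)) := hstep1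
      _ ≤ c * (C0 * S0 ^ (1 / p)) + c * (C1 * S1 ^ (1 / p)) := add_le_add hq0 hq1
      _ ≤ c * (K * (c * (T + ε) ^ (1 / p))) + c * (K * (c * (T + ε) ^ (1 / p))) := by
          have hb0 : C0 * S0 ^ (1 / p) ≤ K * (c * (T + ε) ^ (1 / p)) := by
            have := le_trans hS0le (le_of_eq h2Te)
            exact mul_le_mul (le_max_left _ _) this
              (Real.rpow_nonneg hS0nn _) (by linarith)
          have hb1 : C1 * S1 ^ (1 / p) ≤ K * (c * (T + ε) ^ (1 / p)) := by
            have := le_trans hS1le (le_of_eq h2Te)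
            exact mul_le_mul (le_max_right _ _) this
              (Real.rpow_nonneg hS1nn _) (by linarith)
          exact add_le_add (mul_le_mul_of_nonneg_left hb0 hcpos.le)
            (mul_le_mul_of_nonneg_left hb1 hcpos.le)
      _ = C * (T + ε) ^ (1 / p) := by rw [hCsplit]; ring
  -- pass to the limit ε → 0⁺
  have hcont : ContinuousAt (fun x : ℝ => C * x ^ (1 / p)) T :=
    continuousAt_const.mul (Real.continuousAt_rpow_const T (1 / p) (Or.inr (by positivity)))
  have htendsto : Tendsto (fun ε : ℝ => C * (T + ε) ^ (1 / p)) (𝓝[>] (0:ℝ))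
      (𝓝 (C * T ^ (1 / p))) := by
    have h1' : Tendsto (fun ε : ℝ => T + ε) (𝓝[>] (0:ℝ)) (𝓝 T) := by
      have h2' : Tendsto (fun ε : ℝ => T + ε) (𝓝 (0:ℝ)) (𝓝 (T + 0)) :=
        tendsto_const_nhds.add tendsto_id
      rw [add_zero] at h2'
      exact h2'.mono_left nhdsWithin_le_nhds
    exact hcont.tendsto.comp h1'
  exact ge_of_tendsto htendsto (eventually_nhdsWithin_of_forall fun ε hε => key ε hε)
end
end
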